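/- arXiv:1506.04012 — 4 statements merged into one kernel-verified Lean document; each statement's English description precedes it below -/
import Mathlib

section
/- Let A be an n×n random complex matrix with arbitrary distribution. Let M ≥ 1 and ε, p₀, δ ∈ (0,1/2) with εn an integer. Assume that for every λ₀ ∈ ℂ with |λ₀| ≤ M√n and every set I ⊆ {1,…,n} with |I| = εn, one has P( s_min((A − λ₀·Id)_{I^c}) ≤ 8δM√n and ‖A‖ ≤ M√n ) ≤ p₀. Then the probability that simultaneously ‖A‖ ≤ M√n and there exist a unit eigenvector v of A and a set I ⊆ {1,…,n} with |I| = εn such that ‖v_I‖₂ < δ, is at most 5 δ^{-2} (e/ε)^{εn} p₀. -/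
open MeasureTheory ProbabilityTheory
open scoped ENNReal

noncomputable section

/-- The Euclidean norm of a finitely indexed vector with entries in `ℝ` or `ℂ`. -/
def eNorm {𝕜 : Type*} [RCLike 𝕜] {ι : Type*} [Fintype ι] (v : ι → 𝕜) : ℝ :=
  Real.sqrt (∑ i, ‖v i‖ ^ 2)

/-- Operator (spectral) norm of a matrix: `sup { ‖Ax‖₂ : ‖x‖₂ ≤ 1 }`. -/
def opNorm {𝕜 : Type*} [RCLike 𝕜] {m n : Type*} [Fintype m] [Fintype n]
    (A : Matrix m n 𝕜) : ℝ :=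
  sSup {r : ℝ | ∃ x : n → 𝕜, eNorm x ≤ 1 ∧ r = eNorm (A.mulVec x)}

/-- Smallest singular value of a matrix: `inf { ‖Ax‖₂ : ‖x‖₂ = 1 }`. -/
def sMin {𝕜 : Type*} [RCLike 𝕜] {m n : Type*} [Fintype m] [Fintype n]
    (A : Matrix m n 𝕜) : ℝ :=
  sInf {r : ℝ | ∃ x : n → 𝕜, eNorm x = 1 ∧ r = eNorm (A.mulVec x)}

/-- The submatrix of `A` consisting of the columns whose indices lie outside `I`. -/
def colsOutside {m n : ℕ} (A : Matrix (Fin m) (Fin n) ℂ) (I : Finset (Fin n)) :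
    Matrix (Fin m) {j : Fin n // j ∉ I} ℂ :=
  A.submatrix id fun j => (j : Fin n)

section Helpers
open Nat

variable {ι : Type*} [Fintype ι]

lemma eNorm_nonneg (v : ι → ℂ) : 0 ≤ eNorm v := Real.sqrt_nonneg _

lemma sq_eNorm (v : ι → ℂ) : eNorm v ^ 2 = ∑ i, ‖v i‖ ^ 2 :=
  Real.sq_sqrt (Finset.sum_nonneg fun i _ => sq_nonneg _)

lemma eNorm_eq_norm (v : ι → ℂ) :
    eNorm v = ‖(WithLp.equiv 2 (ι → ℂ)).symm v‖ := by
  rw [EuclideanSpace.norm_eq]; rfl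

lemma eNorm_add_le (u v : ι → ℂ) : eNorm (u + v) ≤ eNorm u + eNorm v := by
  simp only [eNorm_eq_norm]
  rw [show (WithLp.equiv 2 (ι → ℂ)).symm (u + v)
      = (WithLp.equiv 2 (ι → ℂ)).symm u + (WithLp.equiv 2 (ι → ℂ)).symm v from rfl]
  exact norm_add_le _ _

lemma eNorm_sub_le (u v : ι → ℂ) : eNorm (u - v) ≤ eNorm u + eNorm v := by
  simp only [eNorm_eq_norm]
  rw [show (WithLp.equiv 2 (ι → ℂ)).symm (u - v)
      = (WithLp.equiv 2 (ι → ℂ)).symm u - (WithLp.equiv 2 (ι → ℂ)).symm v from rfl]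
  exact norm_sub_le _ _

lemma eNorm_smul (c : ℂ) (v : ι → ℂ) : eNorm (c • v) = ‖c‖ * eNorm v := by
  simp only [eNorm_eq_norm]
  rw [show (WithLp.equiv 2 (ι → ℂ)).symm (c • v)
      = c • (WithLp.equiv 2 (ι → ℂ)).symm v from rfl]
  exact norm_smul _ _

/-- Frobenius bound -/
lemma eNorm_mulVec_le_frob {m : Type*} [Fintype m] (A : Matrix m ι ℂ) (x : ι → ℂ) :
    eNorm (A.mulVec x) ≤ Real.sqrt (∑ i, ∑ j, ‖A i j‖ ^ 2) * eNorm x := by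
  rw [eNorm, eNorm, ← Real.sqrt_mul (by positivity)]
  apply Real.sqrt_le_sqrt
  rw [Finset.sum_mul]
  apply Finset.sum_le_sum
  intro i _
  have h1 : ‖(A.mulVec x) i‖ ≤ ∑ j, ‖A i j‖ * ‖x j‖ := by
    refine (norm_sum_le _ _).trans ?_
    apply Finset.sum_le_sum
    intro j _
    rw [norm_mul]
  calc ‖(A.mulVec x) i‖ ^ 2 ≤ (∑ j, ‖A i j‖ * ‖x j‖) ^ 2 := by
        apply pow_le_pow_left₀ (norm_nonneg _) h1
    _ ≤ (∑ j, ‖A i j‖ ^ 2) * ∑ j, ‖x j‖ ^ 2 :=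
        Finset.sum_mul_sq_le_sq_mul_sq _ _ _

lemma opNorm_bddAbove {m : Type*} [Fintype m] (A : Matrix m ι ℂ) :
    BddAbove {r : ℝ | ∃ x : ι → ℂ, eNorm x ≤ 1 ∧ r = eNorm (A.mulVec x)} := by
  refine ⟨Real.sqrt (∑ i, ∑ j, ‖A i j‖ ^ 2), ?_⟩
  rintro r ⟨x, hx, rfl⟩
  calc eNorm (A.mulVec x) ≤ Real.sqrt (∑ i, ∑ j, ‖A i j‖ ^ 2) * eNorm x :=
        eNorm_mulVec_le_frob A x
    _ ≤ Real.sqrt (∑ i, ∑ j, ‖A i j‖ ^ 2) * 1 := by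
        apply mul_le_mul_of_nonneg_left hx (Real.sqrt_nonneg _)
    _ = _ := mul_one _

lemma eNorm_zero : eNorm (0 : ι → ℂ) = 0 := by
  simp [eNorm]

lemma opNorm_nonneg {m : Type*} [Fintype m] (A : Matrix m ι ℂ) : 0 ≤ opNorm A := by
  apply le_csSup (opNorm_bddAbove A)
  exact ⟨0, by simp [eNorm_zero], by simp [Matrix.mulVec_zero, eNorm_zero]⟩

lemma eNorm_mulVec_le {m : Type*} [Fintype m] (A : Matrix m ι ℂ) (x : ι → ℂ) :
    eNorm (A.mulVec x) ≤ opNorm A * eNorm x := by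
  rcases eq_or_lt_of_le (eNorm_nonneg x) with h | h
  · have hx : ∀ i, x i = 0 := by
      intro i
      have h2 := sq_eNorm x
      rw [← h] at h2
      have := (Finset.sum_eq_zero_iff_of_nonneg (fun j _ => sq_nonneg ‖x j‖)).mp
        (by rw [← h2]; ring) i (Finset.mem_univ i)
      simpa using this
    have : x = 0 := funext hx
    subst this
    simp [Matrix.mulVec_zero, eNorm_zero, ← ‹(0:ℝ) = eNorm (0 : ι → ℂ)›]
  · set c := eNorm x with hc
    have hmem : eNorm (A.mulVec ((c⁻¹ : ℂ) • x)) ∈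
        {r : ℝ | ∃ y : ι → ℂ, eNorm y ≤ 1 ∧ r = eNorm (A.mulVec y)} := by
      refine ⟨(c⁻¹ : ℂ) • x, ?_, rfl⟩
      rw [eNorm_smul]
      simp only [norm_inv, Complex.norm_real]
      rw [Real.norm_of_nonneg (le_of_lt h)]
      rw [inv_mul_cancel₀ (ne_of_gt h)]
    have hle := le_csSup (opNorm_bddAbove A) hmem
    have heq : eNorm (A.mulVec ((c⁻¹ : ℂ) • x)) = c⁻¹ * eNorm (A.mulVec x) := by
      rw [Matrix.mulVec_smul, eNorm_smul]
      simp only [norm_inv, Complex.norm_real]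
      rw [Real.norm_of_nonneg (le_of_lt h)]
    rw [heq] at hle
    calc eNorm (A.mulVec x) = c * (c⁻¹ * eNorm (A.mulVec x)) := by
          field_simp
      _ ≤ c * opNorm A := mul_le_mul_of_nonneg_left hle (le_of_lt h)
      _ = opNorm A * c := mul_comm _ _

lemma sMin_le {m : Type*} [Fintype m] (A : Matrix m ι ℂ) (x : ι → ℂ)
    (hx : eNorm x = 1) : sMin A ≤ eNorm (A.mulVec x) := by
  apply csInf_le
  · refine ⟨0, ?_⟩
    rintro r ⟨y, _, rfl⟩
    exact eNorm_nonneg _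
  · exact ⟨x, hx, rfl⟩

lemma choose_le_exp_pow (n k : ℕ) (hk : 0 < k) :
    (n.choose k : ℝ) ≤ (Real.exp 1 * n / k) ^ k := by
  have hkR : (0:ℝ) < k := Nat.cast_pos.mpr hk
  have hfac : (0:ℝ) < k ! := Nat.cast_pos.mpr (Nat.factorial_pos k)
  have h1 : (k:ℝ) ^ k ≤ Real.exp 1 ^ k * k ! := by
    have h2 : (k:ℝ) ^ k / k ! ≤ Real.exp k := by
      calc (k:ℝ) ^ k / k ! ≤ ∑ i ∈ Finset.range (k+1), (k:ℝ) ^ i / i ! := by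
            exact Finset.single_le_sum (f := fun i => (k:ℝ)^i / i !)
              (fun i _ => by positivity) (Finset.self_mem_range_succ k)
        _ ≤ Real.exp k := Real.sum_le_exp_of_nonneg (by positivity) _
    have h3 : Real.exp (k:ℝ) = Real.exp 1 ^ k := by
      rw [← Real.exp_nat_mul]; norm_num
    rw [div_le_iff₀ hfac] at h2
    rw [← h3]; linarith
  calc (n.choose k : ℝ) ≤ (n:ℝ) ^ k / k ! := Nat.choose_le_pow_div k n
    _ ≤ (Real.exp 1 * n / k) ^ k := by
        rw [div_pow, mul_pow, div_le_div_iff₀ hfac (by positivity)]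
        calc (n:ℝ)^k * (k:ℝ)^k ≤ (n:ℝ)^k * (Real.exp 1 ^ k * k !) := by
              apply mul_le_mul_of_nonneg_left h1 (by positivity)
          _ = Real.exp 1 ^ k * (n:ℝ)^k * k ! := by ring

end Helpers

set_option maxHeartbeats 1000000

/-- **Reduction of delocalization to invertibility** (Rudelson–Vershynin, Proposition 4.1). -/
theorem reduction_delocalization_to_invertibility
    (n : ℕ) (Ω : Type) [MeasurableSpace Ω] (P : Measure Ω) [IsProbabilityMeasure P]
    (A : Ω → Matrix (Fin n) (Fin n) ℂ) (M ε p₀ δ : ℝ) (k : ℕ)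
    (hM : 1 ≤ M) (hε : 0 < ε ∧ ε < 1 / 2) (hp₀ : 0 < p₀ ∧ p₀ < 1 / 2)
    (hδ : 0 < δ ∧ δ < 1 / 2) (hk : (k : ℝ) = ε * n)
    (hinv : ∀ lam : ℂ, ‖lam‖ ≤ M * Real.sqrt n → ∀ I : Finset (Fin n), I.card = k →
      P {ω | sMin (colsOutside (A ω - lam • (1 : Matrix (Fin n) (Fin n) ℂ)) I) ≤
            8 * δ * M * Real.sqrt n ∧ opNorm (A ω) ≤ M * Real.sqrt n} ≤
        ENNReal.ofReal p₀) :
    P {ω | opNorm (A ω) ≤ M * Real.sqrt n ∧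
        ∃ v : Fin n → ℂ, (∃ lam : ℂ, (A ω).mulVec v = lam • v) ∧ eNorm v = 1 ∧
          ∃ I : Finset (Fin n), I.card = k ∧ Real.sqrt (∑ i ∈ I, ‖v i‖ ^ 2) < δ} ≤
      ENNReal.ofReal (5 / δ ^ 2 * (Real.exp 1 / ε) ^ (ε * n) * p₀) := by
  obtain ⟨hε0, hε2⟩ := hε
  obtain ⟨hp0, hp2⟩ := hp₀
  obtain ⟨hδ0, hδ2⟩ := hδ
  -- trivial case n = 0
  rcases Nat.eq_zero_or_pos n with hn | hn
  · subst hn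
    have hempty : {ω | opNorm (A ω) ≤ M * Real.sqrt (0:ℕ) ∧
        ∃ v : Fin 0 → ℂ, (∃ lam : ℂ, (A ω).mulVec v = lam • v) ∧ eNorm v = 1 ∧
          ∃ I : Finset (Fin 0), I.card = k ∧ Real.sqrt (∑ i ∈ I, ‖v i‖ ^ 2) < δ} ⊆ ∅ := by
      rintro ω ⟨-, v, -, h1, -⟩
      exact absurd h1 (by simp [eNorm])
    refine le_trans (measure_mono hempty) ?_
    simp
  have hn1 : (1:ℝ) ≤ (n:ℝ) := by exact_mod_cast hn
  have hk0 : 0 < k := by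
    rcases Nat.eq_zero_or_pos k with h0 | h
    · rw [h0] at hk
      simp at hk
      rcases hk with h | h
      · exact absurd h (ne_of_gt hε0)
      · omega
    · exact h
  set R := M * Real.sqrt n with hRdef
  have hsqn : 1 ≤ Real.sqrt n := by
    rw [show (1:ℝ) = Real.sqrt 1 by simp]
    exact Real.sqrt_le_sqrt hn1
  have hR1 : 1 ≤ R := by nlinarith
  have hR0 : 0 < R := by linarith
  set s : ℝ := 2 * δ * R with hsdef
  have hs0 : 0 < s := by positivity
  set N : ℤ := ⌊1 / (2 * δ) + 1 / 2⌋ with hNdef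
  have hN0 : (0:ℤ) ≤ N := by
    apply Int.le_floor.mpr
    simp only [Int.cast_zero]
    positivity
  set pnet : ℤ × ℤ → ℂ := fun p => ({ re := p.1 * s, im := p.2 * s } : ℂ) with hptdef
  set S : Finset (ℤ × ℤ) :=
    (Finset.Icc (-N) N ×ˢ Finset.Icc (-N) N).filter (fun p => ‖pnet p‖ ≤ R) with hSdef
  set T : Finset (Finset (Fin n)) := Finset.powersetCard k Finset.univ with hTdef
  set Ev : ℤ × ℤ → Finset (Fin n) → Set Ω := fun p I =>
    {ω | sMin (colsOutside (A ω - pnet p • (1 : Matrix (Fin n) (Fin n) ℂ)) I) ≤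
          8 * δ * M * Real.sqrt n ∧ opNorm (A ω) ≤ M * Real.sqrt n} with hEvdef
  -- pointwise inclusion
  have hsub : {ω | opNorm (A ω) ≤ M * Real.sqrt n ∧
        ∃ v : Fin n → ℂ, (∃ lam : ℂ, (A ω).mulVec v = lam • v) ∧ eNorm v = 1 ∧
          ∃ I : Finset (Fin n), I.card = k ∧ Real.sqrt (∑ i ∈ I, ‖v i‖ ^ 2) < δ} ⊆
      ⋃ p ∈ S, ⋃ I ∈ T, Ev p I := by
    rintro ω ⟨hA, v, ⟨lam, hAv⟩, hv1, I, hI, hvI⟩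
    -- |lam| ≤ R
    have hlamR : ‖lam‖ ≤ R := by
      have h1 : eNorm ((A ω).mulVec v) = ‖lam‖ := by
        rw [hAv, eNorm_smul, hv1, mul_one]
      have h2 := eNorm_mulVec_le (A ω) v
      rw [hv1, mul_one, h1] at h2
      exact h2.trans hA
    set lam' : ℂ := ((1 - 2*δ : ℝ) : ℂ) * lam with hlam'def
    have h2δ : 0 < 1 - 2*δ := by linarith
    have hlam'norm : ‖lam'‖ = (1 - 2*δ) * ‖lam‖ := by
      rw [hlam'def, norm_mul, Complex.norm_real, Real.norm_of_nonneg (le_of_lt h2δ)]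
    set a : ℤ := round (lam'.re / s) with hadef
    set b : ℤ := round (lam'.im / s) with hbdef
    have hround : ∀ x : ℝ, |(round (x / s) : ℝ) * s - x| ≤ s / 2 := by
      intro x
      have h := abs_sub_round (x / s)
      have heq : (round (x / s) : ℝ) * s - x = -(s * (x / s - round (x / s))) := by
        field_simp
        ring
      rw [heq, abs_neg, abs_mul, abs_of_pos hs0]
      calc s * |x / s - round (x / s)| ≤ s * (1/2) :=
            mul_le_mul_of_nonneg_left h (le_of_lt hs0)
        _ = s / 2 := by ring
    set g : ℂ := pnet (a, b) with hgdef
    have hgre : g.re = (a:ℝ) * s := rfl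
    have hgim : g.im = (b:ℝ) * s := rfl
    have hgl' : ‖g - lam'‖ ≤ s := by
      have h1 : ‖g - lam'‖ ≤ |(g - lam').re| + |(g - lam').im| := by
        exact Complex.norm_le_abs_re_add_abs_im _
      have h2 : (g - lam').re = (a:ℝ) * s - lam'.re := by
        rw [Complex.sub_re, hgre]
      have h3 : (g - lam').im = (b:ℝ) * s - lam'.im := by
        rw [Complex.sub_im, hgim]
      rw [h2, h3] at h1
      have h4 := hround lam'.re
      have h5 := hround lam'.im
      rw [← hadef] at h4
      rw [← hbdef] at h5
      linarith
    have hlamg : ‖lam - g‖ ≤ 4*δ*R := by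
      have h1 : lam - lam' = ((2*δ : ℝ) : ℂ) * lam := by
        rw [hlam'def]
        push_cast
        ring
      have h2 : ‖lam - lam'‖ ≤ 2*δ*R := by
        rw [h1, norm_mul, Complex.norm_real, Real.norm_of_nonneg (by positivity)]
        exact mul_le_mul_of_nonneg_left hlamR (by positivity)
      calc ‖lam - g‖ ≤ ‖lam - lam'‖ + ‖lam' - g‖ := by
            have heq : lam - g = (lam - lam') + (lam' - g) := by ring
            rw [heq]
            exact norm_add_le _ _
        _ ≤ 2*δ*R + s := by
            rw [norm_sub_rev lam' g]
            exact add_le_add h2 hgl'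
        _ = 4*δ*R := by rw [hsdef]; ring
    have hgR : ‖g‖ ≤ R := by
      calc ‖g‖ ≤ ‖lam'‖ + ‖g - lam'‖ := by
            have heq : lam' + (g - lam') = g := by ring
            conv_lhs => rw [← heq]
            exact norm_add_le _ _
        _ ≤ (1-2*δ)*R + s := by
            apply add_le_add _ hgl'
            rw [hlam'norm]
            exact mul_le_mul_of_nonneg_left hlamR (le_of_lt h2δ)
        _ = R := by rw [hsdef]; ring
    -- coordinates in the box
    have hcoord : ∀ x : ℝ, |x| ≤ ‖lam'‖ → |round (x / s)| ≤ N := by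
      intro x hx
      have h1 : |(round (x / s) : ℝ)| ≤ |x / s| + 1/2 := by
        have h := abs_sub_round (x / s)
        calc |(round (x / s) : ℝ)| = |x/s - (x/s - round (x/s))| := by ring_nf
          _ ≤ |x/s| + |x/s - round (x/s)| := abs_sub _ _
          _ ≤ |x/s| + 1/2 := by linarith
      have h2 : |x / s| ≤ 1/(2*δ) := by
        rw [abs_div, abs_of_pos hs0]
        rw [div_le_div_iff₀ hs0 (by positivity)]
        have hxR : |x| ≤ R := by
          refine hx.trans ?_
          rw [hlam'norm]
          nlinarith
        rw [hsdef]
        nlinarith [abs_nonneg x]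
      apply Int.le_floor.mpr
      have : ((|round (x / s)| : ℤ) : ℝ) = |(round (x / s) : ℝ)| := by
        push_cast
        rfl
      rw [this]
      linarith
    have haN : |a| ≤ N := by
      apply hcoord lam'.re
      exact Complex.abs_re_le_norm lam'
    have hbN : |b| ≤ N := by
      apply hcoord lam'.im
      exact Complex.abs_im_le_norm lam'
    have hmemS : (a, b) ∈ S := by
      rw [hSdef, Finset.mem_filter]
      refine ⟨?_, ?_⟩
      · rw [Finset.mem_product]
        constructor <;> rw [Finset.mem_Icc]
        · exact ⟨neg_le_of_abs_le haN, le_of_abs_le haN⟩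
        · exact ⟨neg_le_of_abs_le hbN, le_of_abs_le hbN⟩
      · exact hgR
    have hmemT : I ∈ T := Finset.mem_powersetCard_univ.mpr hI
    -- the sMin bound
    set Mw : Matrix (Fin n) (Fin n) ℂ := A ω - g • (1 : Matrix (Fin n) (Fin n) ℂ) with hMwdef
    set vI : Fin n → ℂ := fun j => if j ∈ I then v j else 0 with hvIdef
    set vOut : Fin n → ℂ := fun j => if j ∈ I then 0 else v j with hvOutdef
    set w : {j : Fin n // j ∉ I} → ℂ := fun j => v j with hwdef
    have hsum1 : ∑ i, ‖v i‖^2 = 1 := by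
      have h := sq_eNorm v
      rw [hv1] at h
      rw [← h]
      norm_num
    set δ' := Real.sqrt (∑ i ∈ I, ‖v i‖ ^ 2) with hδ'def
    have hδ'0 : 0 ≤ δ' := Real.sqrt_nonneg _
    have hδ'sq : δ'^2 = ∑ i ∈ I, ‖v i‖^2 :=
      Real.sq_sqrt (Finset.sum_nonneg fun i _ => sq_nonneg _)
    have hvInorm : eNorm vI = δ' := by
      rw [eNorm, hδ'def]
      congr 1
      have h1 : ∀ j ∈ Finset.univ, ‖vI j‖^2 = if j ∈ I then ‖v j‖^2 else 0 := by
        intro j _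
        by_cases hj : j ∈ I <;> simp [hvIdef, hj]
      rw [Finset.sum_congr rfl h1, Finset.sum_ite_mem, Finset.univ_inter]
    have hw2 : (eNorm w)^2 = 1 - δ'^2 := by
      rw [sq_eNorm]
      have h1 : ∑ j ∈ Iᶜ, ‖v j‖^2 = ∑ j : {j : Fin n // j ∉ I}, ‖w j‖^2 :=
        Finset.sum_subtype Iᶜ (fun x => Finset.mem_compl) (fun j => ‖v j‖^2)
      rw [← h1]
      have h2 := Finset.sum_add_sum_compl I (fun j => ‖v j‖^2)
      rw [hsum1] at h2
      rw [hδ'sq]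
      linarith
    set c := eNorm w with hcdef
    have hδ'lt : δ' < δ := hvI
    have hc2 : (3:ℝ)/4 ≤ c^2 := by rw [hw2]; nlinarith
    have hc0 : 0 ≤ c := eNorm_nonneg w
    have hc34 : 3/4 ≤ c := by nlinarith
    have hcpos : 0 < c := by linarith
    have hBw : (colsOutside Mw I).mulVec w = Mw.mulVec vOut := by
      funext i
      show ∑ j : {j : Fin n // j ∉ I}, Mw i (↑j) * v ↑j = ∑ j, Mw i j * vOut j
      calc ∑ j : {j : Fin n // j ∉ I}, Mw i (↑j) * v ↑j
          = ∑ j ∈ Iᶜ, Mw i j * v j :=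
            (Finset.sum_subtype Iᶜ (fun x => Finset.mem_compl) (fun j => Mw i j * v j)).symm
        _ = ∑ j, Mw i j * vOut j := by
            have h1 : ∀ j ∈ Finset.univ, Mw i j * vOut j = if j ∈ Iᶜ then Mw i j * v j else 0 := by
              intro j _
              by_cases hj : j ∈ I <;> simp [hvOutdef, hj, Finset.mem_compl]
            rw [Finset.sum_congr rfl h1, Finset.sum_ite_mem, Finset.univ_inter]
    have hvsplit : vOut = v - vI := by
      funext j
      by_cases hj : j ∈ I <;> simp [hvOutdef, hvIdef, hj]
    have hMv : Mw.mulVec v = (lam - g) • v := by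
      rw [hMwdef, Matrix.sub_mulVec, Matrix.smul_mulVec, Matrix.one_mulVec, hAv, sub_smul]
    have hMvI_bound : eNorm (Mw.mulVec vI) ≤ 2*R*δ' := by
      rw [hMwdef, Matrix.sub_mulVec, Matrix.smul_mulVec, Matrix.one_mulVec]
      calc eNorm ((A ω).mulVec vI - g • vI)
          ≤ eNorm ((A ω).mulVec vI) + eNorm (g • vI) := eNorm_sub_le _ _
        _ ≤ opNorm (A ω) * eNorm vI + ‖g‖ * eNorm vI :=
            add_le_add (eNorm_mulVec_le _ _) (le_of_eq (eNorm_smul _ _))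
        _ ≤ R * δ' + R * δ' := by
            rw [hvInorm]
            exact add_le_add (mul_le_mul_of_nonneg_right hA hδ'0)
              (mul_le_mul_of_nonneg_right hgR hδ'0)
        _ = 2*R*δ' := by ring
    have hBw_bound : eNorm ((colsOutside Mw I).mulVec w) ≤ 6*δ*R := by
      rw [hBw, hvsplit, Matrix.mulVec_sub, hMv]
      calc eNorm ((lam - g) • v - Mw.mulVec vI)
          ≤ eNorm ((lam - g) • v) + eNorm (Mw.mulVec vI) := eNorm_sub_le _ _
        _ ≤ ‖lam - g‖ * 1 + 2*R*δ' := by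
            rw [eNorm_smul, hv1]
            exact add_le_add le_rfl hMvI_bound
        _ ≤ 4*δ*R + 2*R*δ := by
            have h1 : 2*R*δ' ≤ 2*R*δ := by nlinarith
            linarith
        _ = 6*δ*R := by ring
    have hunit : eNorm (((c⁻¹ : ℝ) : ℂ) • w) = 1 := by
      rw [eNorm_smul, Complex.norm_real, Real.norm_of_nonneg (by positivity), ← hcdef]
      exact inv_mul_cancel₀ (ne_of_gt hcpos)
    have hsmin : sMin (colsOutside Mw I) ≤ 8*δ*M*Real.sqrt n := by
      have h1 := sMin_le (colsOutside Mw I) _ hunit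
      rw [Matrix.mulVec_smul, eNorm_smul, Complex.norm_real,
        Real.norm_of_nonneg (by positivity)] at h1
      have h2 : c⁻¹ * eNorm ((colsOutside Mw I).mulVec w) ≤ 8*δ*R := by
        rw [inv_mul_le_iff₀ hcpos]
        have h3 : 6*δ*R ≤ 8*δ*R*c := by nlinarith
        linarith
      calc sMin (colsOutside Mw I) ≤ c⁻¹ * eNorm ((colsOutside Mw I).mulVec w) := h1
        _ ≤ 8*δ*R := h2
        _ = 8*δ*M*Real.sqrt n := by rw [hRdef]; ring
    refine Set.mem_iUnion₂.mpr ⟨(a, b), hmemS, Set.mem_iUnion₂.mpr ⟨I, hmemT, ?_⟩⟩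
    simp only [hEvdef, Set.mem_setOf_eq]
    exact ⟨hsmin, hA⟩
  -- union bound
  calc P _ ≤ P (⋃ p ∈ S, ⋃ I ∈ T, Ev p I) := measure_mono hsub
    _ ≤ ∑ p ∈ S, P (⋃ I ∈ T, Ev p I) := measure_biUnion_finset_le S _
    _ ≤ ∑ p ∈ S, ∑ I ∈ T, P (Ev p I) :=
        Finset.sum_le_sum fun p _ => measure_biUnion_finset_le T _
    _ ≤ ∑ p ∈ S, ∑ I ∈ T, ENNReal.ofReal p₀ := by
        apply Finset.sum_le_sum
        intro p hp
        apply Finset.sum_le_sum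
        intro I hI
        have hpR : ‖pnet p‖ ≤ M * Real.sqrt n := (Finset.mem_filter.mp hp).2
        have hIk : I.card = k := (Finset.mem_powersetCard_univ.mp hI)
        exact hinv (pnet p) hpR I hIk
    _ = (S.card * T.card : ℕ) • ENNReal.ofReal p₀ := by
        rw [Finset.sum_const, Finset.sum_const, mul_smul]
    _ ≤ ENNReal.ofReal (5 / δ ^ 2 * (Real.exp 1 / ε) ^ (ε * n) * p₀) := by
        rw [nsmul_eq_mul, ← ENNReal.ofReal_natCast, ← ENNReal.ofReal_mul (Nat.cast_nonneg _)]
        apply ENNReal.ofReal_le_ofReal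
        -- card bounds
        have hScard : (S.card : ℝ) ≤ (1/δ + 2)^2 := by
          have h1 : S.card ≤ ((Finset.Icc (-N) N).card)^2 := by
            calc S.card ≤ ((Finset.Icc (-N) N) ×ˢ (Finset.Icc (-N) N)).card :=
                  Finset.card_filter_le _ _
              _ = _ := by rw [Finset.card_product]; ring
          have h2 : ((Finset.Icc (-N) N).card : ℝ) ≤ 1/δ + 2 := by
            have hc : ((Finset.Icc (-N) N).card : ℤ) = 2*N + 1 := by
              rw [Int.card_Icc]; omega
            have hcr : ((Finset.Icc (-N) N).card : ℝ) = 2*(N:ℝ) + 1 := by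
              exact_mod_cast congrArg (fun z : ℤ => (z : ℝ)) hc
            have h3 : (N:ℝ) ≤ 1/(2*δ) + 1/2 := Int.floor_le _
            have h5 : 2*(1/(2*δ)) = 1/δ := by field_simp
            rw [hcr]; linarith
          calc (S.card : ℝ) ≤ (((Finset.Icc (-N) N).card : ℝ))^2 := by
                exact_mod_cast h1
            _ ≤ (1/δ + 2)^2 := by
                apply pow_le_pow_left₀ (Nat.cast_nonneg _) h2
        have hTcard : (T.card : ℝ) ≤ (Real.exp 1 / ε) ^ (ε * n) := by
          have h1 : T.card = n.choose k := by
            rw [hTdef, Finset.card_powersetCard, Finset.card_univ, Fintype.card_fin]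
          have h2 : Real.exp 1 * n / k = Real.exp 1 / ε := by
            rw [hk]
            field_simp
          have h3 : (Real.exp 1 / ε) ^ (ε * n) = (Real.exp 1 / ε) ^ (k:ℕ) := by
            rw [← hk, Real.rpow_natCast]
          rw [h1, h3]
          calc (n.choose k : ℝ) ≤ (Real.exp 1 * n / k) ^ k := choose_le_exp_pow n k hk0
            _ = (Real.exp 1 / ε) ^ k := by rw [h2]
        have hfive : (1/δ + 2)^2 ≤ 5 / δ^2 := by
          have ha : 2 < 1/δ := by
            rw [lt_div_iff₀ hδ0]; linarith
          have hb : 5/δ^2 = 5*(1/δ)^2 := by field_simp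
          rw [hb]
          nlinarith [ha]
        have hrpow : (0:ℝ) ≤ (Real.exp 1 / ε) ^ (ε * n) := by positivity
        calc (↑(S.card * T.card) : ℝ) * p₀ = (S.card : ℝ) * (T.card : ℝ) * p₀ := by
              push_cast; ring
          _ ≤ (1/δ + 2)^2 * ((Real.exp 1 / ε) ^ (ε * n)) * p₀ := by
              apply mul_le_mul_of_nonneg_right _ (le_of_lt hp0)
              apply mul_le_mul hScard hTcard (Nat.cast_nonneg _) (by positivity)
          _ ≤ 5 / δ ^ 2 * (Real.exp 1 / ε) ^ (ε * n) * p₀ := by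
              apply mul_le_mul_of_nonneg_right _ (le_of_lt hp0)
              apply mul_le_mul_of_nonneg_right hfive hrpow
end
end

section
/- There is an absolute constant C such that the following holds. Let Z = (Z₁,…,Z_n) be a random vector in ℂ^n with independent coordinates, and suppose there exist numbers t₀, M ≥ 0 such that L(Z_j, t) ≤ M(t + t₀) for every j ∈ {1,…,n} and every t ≥ 0. Then L(Z, t√n) ≤ [C M (t + t₀)]^n for every t ≥ 0. -/
open MeasureTheory ProbabilityTheory
open scoped ENNReal

noncomputable section

/-- The Lévy concentration function of a random variable with values in a normed group:
`L(Z, t) = sup_u P(‖Z - u‖ ≤ t)`. -/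
def concFn {Ω : Type*} [MeasurableSpace Ω] {E : Type*} [SeminormedAddGroup E]
    (P : Measure Ω) (Z : Ω → E) (t : ℝ) : ℝ≥0∞ :=
  ⨆ u : E, P {ω | ‖Z ω - u‖ ≤ t}

/-- The Lévy concentration function of a finitely indexed random vector with respect to the
Euclidean norm: `L(Z, t) = sup_u P(‖Z - u‖₂ ≤ t)`. -/
def concFnE {Ω : Type*} [MeasurableSpace Ω] {𝕜 : Type*} [RCLike 𝕜] {ι : Type*} [Fintype ι]
    (P : Measure Ω) (Z : Ω → ι → 𝕜) (t : ℝ) : ℝ≥0∞ :=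
  ⨆ u : ι → 𝕜, P {ω | eNorm (fun i => Z ω i - u i) ≤ t}

/-- Key per-coordinate estimate: if small-ball probabilities of a nonnegative random
variable `X` (thought of as `‖Z - u‖²`) satisfy linear bounds, then the Laplace transform
`E exp(-X/t²)` is at most `4 M (t+t₀)`. -/
lemma mgf_coord_le {Ω : Type} [MeasurableSpace Ω] {P : Measure Ω} [IsProbabilityMeasure P]
    {X : Ω → ℝ} (hXm : Measurable X) (hX0 : ∀ ω, 0 ≤ X ω) {t M t₀ : ℝ}
    (ht : 0 < t) (hM : 0 ≤ M) (ht₀ : 0 ≤ t₀)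
    (hconc : ∀ k : ℕ, P {ω | X ω ≤ ((k : ℝ) + 1) * t ^ 2}
      ≤ ENNReal.ofReal (M * (((k : ℝ) + 1) * (t + t₀)))) :
    mgf X P (-(t ^ 2)⁻¹) ≤ 4 * (M * (t + t₀)) := by
  have ht2 : (0:ℝ) < t ^ 2 := by positivity
  set s : ℝ := -(t ^ 2)⁻¹ with hs
  set F : ℕ → Ω → ℝ≥0∞ := fun k =>
    ({ω | X ω ≤ ((k : ℝ) + 1) * t ^ 2}).indicator (fun _ => ENNReal.ofReal (Real.exp (-(k:ℝ))))
    with hF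
  have hmeasSet : ∀ k : ℕ, MeasurableSet {ω | X ω ≤ ((k : ℝ) + 1) * t ^ 2} := fun k =>
    measurableSet_le hXm measurable_const
  -- pointwise bound
  have hpt : ∀ ω, ENNReal.ofReal (Real.exp (s * X ω)) ≤ ∑' k, F k ω := by
    intro ω
    set k : ℕ := ⌊X ω / t ^ 2⌋₊ with hk
    have h1 : (k : ℝ) ≤ X ω / t ^ 2 := Nat.floor_le (div_nonneg (hX0 ω) ht2.le)
    have h2 : X ω / t ^ 2 < (k : ℝ) + 1 := Nat.lt_floor_add_one _
    have hmem : ω ∈ {ω | X ω ≤ ((k : ℝ) + 1) * t ^ 2} := by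
      have := (div_lt_iff₀ ht2).mp h2
      exact le_of_lt this
    have hFk : F k ω = ENNReal.ofReal (Real.exp (-(k:ℝ))) := by
      rw [hF]; simp [Set.indicator_of_mem hmem]
    have hexp : Real.exp (s * X ω) ≤ Real.exp (-(k:ℝ)) := by
      apply Real.exp_le_exp.mpr
      have : s * X ω = -(X ω / t ^ 2) := by rw [hs]; field_simp
      rw [this]
      exact neg_le_neg h1
    calc ENNReal.ofReal (Real.exp (s * X ω)) ≤ F k ω := by
          rw [hFk]; exact ENNReal.ofReal_le_ofReal hexp
      _ ≤ ∑' k, F k ω := ENNReal.le_tsum k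
  -- the geometric series bound
  have hgeom : ∀ k : ℕ, Real.exp (-(k:ℝ)) * (M * (((k : ℝ) + 1) * (t + t₀)))
      ≤ (2 / Real.exp 1) ^ k * (M * (t + t₀)) := by
    intro k
    have he1 : Real.exp (-(k:ℝ)) * ((k:ℝ) + 1) ≤ (2 / Real.exp 1) ^ k := by
      have h2k : ((k:ℝ) + 1) ≤ 2 ^ k := by
        have := Nat.lt_two_pow_self (n := k)
        have : (k : ℝ) + 1 ≤ ((2 ^ k : ℕ) : ℝ) := by exact_mod_cast this
        simpa using this
      have hek : Real.exp (-(k:ℝ)) = (Real.exp 1 ^ k)⁻¹ := by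
        rw [Real.exp_neg, Real.exp_nat_mul 1 k |>.symm]; simp
      rw [hek, div_pow]
      rw [div_eq_mul_inv]
      have hepos : (0:ℝ) < Real.exp 1 ^ k := by positivity
      calc (Real.exp 1 ^ k)⁻¹ * ((k:ℝ) + 1) = ((k:ℝ) + 1) * (Real.exp 1 ^ k)⁻¹ := by ring
        _ ≤ (2:ℝ) ^ k * (Real.exp 1 ^ k)⁻¹ := by gcongr
    calc Real.exp (-(k:ℝ)) * (M * (((k : ℝ) + 1) * (t + t₀)))
        = (Real.exp (-(k:ℝ)) * ((k:ℝ) + 1)) * (M * (t + t₀)) := by ring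
      _ ≤ (2 / Real.exp 1) ^ k * (M * (t + t₀)) := by
          apply mul_le_mul_of_nonneg_right he1 (by positivity)
  have hratio : (0:ℝ) ≤ 2 / Real.exp 1 ∧ 2 / Real.exp 1 < 1 := by
    constructor
    · positivity
    · rw [div_lt_one (Real.exp_pos 1)]
      have := Real.exp_one_gt_d9
      linarith
  have hsummable : Summable (fun k : ℕ => (2 / Real.exp 1) ^ k * (M * (t + t₀))) :=
    (summable_geometric_of_lt_one hratio.1 hratio.2).mul_right _
  have htsum : (∑' k : ℕ, (2 / Real.exp 1) ^ k * (M * (t + t₀))) ≤ 4 * (M * (t + t₀)) := by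
    rw [tsum_mul_right, tsum_geometric_of_lt_one hratio.1 hratio.2]
    have hE := Real.exp_one_gt_d9
    have h34 : 2 / Real.exp 1 ≤ 3 / 4 := by
      rw [div_le_div_iff₀ (Real.exp_pos 1) (by norm_num)]
      linarith
    have hpos : (0:ℝ) < 1 - 2 / Real.exp 1 := by linarith [hratio.2]
    have hinv : (1 - 2 / Real.exp 1)⁻¹ ≤ 4 := by
      rw [inv_le_comm₀ hpos (by norm_num)]
      norm_num
      linarith
    apply mul_le_mul_of_nonneg_right hinv (by positivity)
  -- main lintegral computation
  have key : ∫⁻ ω, ENNReal.ofReal (Real.exp (s * X ω)) ∂P ≤ ENNReal.ofReal (4 * (M * (t + t₀))) := by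
    calc ∫⁻ ω, ENNReal.ofReal (Real.exp (s * X ω)) ∂P
        ≤ ∫⁻ ω, ∑' k, F k ω ∂P := lintegral_mono hpt
      _ = ∑' k, ∫⁻ ω, F k ω ∂P := lintegral_tsum (fun k =>
          ((measurable_const.indicator (hmeasSet k)).aemeasurable))
      _ = ∑' k : ℕ, ENNReal.ofReal (Real.exp (-(k:ℝ))) * P {ω | X ω ≤ ((k : ℝ) + 1) * t ^ 2} :=
          tsum_congr (fun k => lintegral_indicator_const (hmeasSet k) _)
      _ ≤ ∑' k : ℕ, ENNReal.ofReal (Real.exp (-(k:ℝ))) * ENNReal.ofReal (M * (((k : ℝ) + 1) * (t + t₀))) :=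
          ENNReal.tsum_le_tsum (fun k => mul_le_mul_right (hconc k) _)
      _ = ∑' k : ℕ, ENNReal.ofReal (Real.exp (-(k:ℝ)) * (M * (((k : ℝ) + 1) * (t + t₀)))) :=
          tsum_congr (fun k => (ENNReal.ofReal_mul (Real.exp_nonneg _)).symm)
      _ ≤ ∑' k : ℕ, ENNReal.ofReal ((2 / Real.exp 1) ^ k * (M * (t + t₀))) :=
          ENNReal.tsum_le_tsum (fun k => ENNReal.ofReal_le_ofReal (hgeom k))
      _ = ENNReal.ofReal (∑' k : ℕ, (2 / Real.exp 1) ^ k * (M * (t + t₀))) :=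
          (ENNReal.ofReal_tsum_of_nonneg (fun k => by positivity) hsummable).symm
      _ ≤ ENNReal.ofReal (4 * (M * (t + t₀))) := ENNReal.ofReal_le_ofReal htsum
  -- conclude
  have hmgf : mgf X P s = (∫⁻ ω, ENNReal.ofReal (Real.exp (s * X ω)) ∂P).toReal := by
    rw [mgf]
    exact integral_eq_lintegral_of_nonneg_ae (ae_of_all _ fun ω => (Real.exp_pos _).le)
      ((hXm.const_mul s).exp.aestronglyMeasurable)
  rw [hmgf]
  calc (∫⁻ ω, ENNReal.ofReal (Real.exp (s * X ω)) ∂P).toReal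
      ≤ (ENNReal.ofReal (4 * (M * (t + t₀)))).toReal :=
        ENNReal.toReal_mono ENNReal.ofReal_ne_top key
    _ = 4 * (M * (t + t₀)) := ENNReal.toReal_ofReal (by positivity)

/-- **Tensorization of small ball probabilities** (Rudelson–Vershynin, Lemma 3.2). -/
theorem tensorization :
    ∃ C : ℝ, 0 < C ∧
      ∀ (n : ℕ) (Ω : Type) (_ : MeasurableSpace Ω) (P : Measure Ω),
        IsProbabilityMeasure P →
        ∀ Z : Ω → Fin n → ℂ,
          (∀ j, Measurable fun ω => Z ω j) →
          iIndepFun (fun j ω => Z ω j) P →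
          ∀ t₀ M : ℝ, 0 ≤ t₀ → 0 ≤ M →
            (∀ j, ∀ t : ℝ, 0 ≤ t →
              concFn P (fun ω => Z ω j) t ≤ ENNReal.ofReal (M * (t + t₀))) →
            ∀ t : ℝ, 0 ≤ t →
              concFnE P Z (t * Real.sqrt n) ≤ ENNReal.ofReal ((C * M * (t + t₀)) ^ n) := by
  refine ⟨4 * Real.exp 1, by positivity, ?_⟩
  intro n Ω mΩ P hP Z hZm hindep t₀ M ht₀ hM hconc t ht
  have hE := Real.exp_one_gt_d9
  have hC1 : (1:ℝ) ≤ 4 * Real.exp 1 := by nlinarith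
  rw [concFnE]
  refine iSup_le fun u => ?_
  rcases eq_or_lt_of_le ht with rfl | htpos
  · -- case t = 0
    have hsub : {ω | eNorm (fun i => Z ω i - u i) ≤ 0 * Real.sqrt n}
        ⊆ ⋂ j, (fun ω => Z ω j) ⁻¹' {z : ℂ | ‖z - u j‖ ≤ 0} := by
      intro ω hω
      simp only [Set.mem_setOf_eq, zero_mul] at hω
      have hsum : ∑ i, ‖Z ω i - u i‖ ^ 2 ≤ 0 := by
        by_contra hcon
        push_neg at hcon
        have := Real.sqrt_pos.mpr hcon
        rw [eNorm] at hω
        linarith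
      simp only [Set.mem_iInter, Set.mem_preimage, Set.mem_setOf_eq]
      intro j
      have hterm : ‖Z ω j - u j‖ ^ 2 ≤ 0 :=
        le_trans (Finset.single_le_sum (f := fun i => ‖Z ω i - u i‖ ^ 2)
          (fun i _ => by positivity) (Finset.mem_univ j)) hsum
      nlinarith [norm_nonneg (Z ω j - u j)]
    calc P {ω | eNorm (fun i => Z ω i - u i) ≤ 0 * Real.sqrt n}
        ≤ P (⋂ j, (fun ω => Z ω j) ⁻¹' {z : ℂ | ‖z - u j‖ ≤ 0}) := measure_mono hsub
      _ = ∏ j, P ((fun ω => Z ω j) ⁻¹' {z : ℂ | ‖z - u j‖ ≤ 0}) :=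
          hindep.meas_iInter (fun j =>
            ⟨{z : ℂ | ‖z - u j‖ ≤ 0},
             measurableSet_le (measurable_id.sub_const (u j)).norm measurable_const, rfl⟩)
      _ ≤ ∏ _j : Fin n, ENNReal.ofReal (M * (0 + t₀)) := by
          refine Finset.prod_le_prod' fun j _ => ?_
          refine le_trans ?_ (hconc j 0 le_rfl)
          rw [concFn]
          exact le_iSup (fun v => P {ω | ‖Z ω j - v‖ ≤ 0}) (u j)
      _ = ENNReal.ofReal (M * (0 + t₀)) ^ n := by
          rw [Finset.prod_const, Finset.card_univ, Fintype.card_fin]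
      _ ≤ ENNReal.ofReal ((4 * Real.exp 1 * M * (0 + t₀)) ^ n) := by
          rw [← ENNReal.ofReal_pow (by positivity)]
          refine ENNReal.ofReal_le_ofReal (pow_le_pow_left₀ (by positivity) ?_ n)
          nlinarith [mul_nonneg hM ht₀]
  · -- case 0 < t
    set X : Fin n → Ω → ℝ := fun j ω => ‖Z ω j - u j‖ ^ 2 with hX
    have hXm : ∀ j, Measurable (X j) := fun j =>
      ((hZm j).sub_const (u j)).norm.pow_const 2
    have hX0 : ∀ j ω, 0 ≤ X j ω := fun j ω => by positivity
    have hiX : iIndepFun X P :=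
      hindep.comp (fun j (z : ℂ) => ‖z - u j‖ ^ 2)
        (fun j => ((measurable_id.sub_const (u j)).norm.pow_const 2))
    set s : ℝ := -(t ^ 2)⁻¹ with hs
    have hs_le : s ≤ 0 := by rw [hs]; simp only [neg_nonpos]; positivity
    have hSm : Measurable (fun ω => ∑ j, X j ω) :=
      Finset.measurable_sum Finset.univ (fun j _ => hXm j)
    have h_int : Integrable (fun ω => Real.exp (s * (∑ j, X j) ω)) P := by
      refine Integrable.mono' (integrable_const 1) ?_ (ae_of_all _ fun ω => ?_)
      · have : (fun ω => Real.exp (s * (∑ j, X j) ω))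
            = fun ω => Real.exp (s * ∑ j, X j ω) := by
          funext ω; rw [Finset.sum_apply]
        rw [this]
        exact ((hSm.const_mul s).exp).aestronglyMeasurable
      · have h0 : 0 ≤ (∑ j, X j) ω := by
          rw [Finset.sum_apply]; exact Finset.sum_nonneg fun j _ => hX0 j ω
        have hneg : s * (∑ j, X j) ω ≤ 0 := by
          have := mul_nonneg (neg_nonneg.mpr hs_le) h0
          nlinarith
        rw [Real.norm_eq_abs, abs_of_pos (Real.exp_pos _)]
        exact Real.exp_le_one_iff.mpr hneg
    have hcher := measure_le_le_exp_mul_mgf (μ := P) (X := ∑ j, X j) ((n:ℝ) * t ^ 2) hs_le h_int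
    -- per-coordinate mgf bound
    have hcoord : ∀ j, mgf (X j) P s ≤ 4 * (M * (t + t₀)) := by
      intro j
      refine mgf_coord_le (hXm j) (hX0 j) htpos hM ht₀ fun k => ?_
      have hsq : Real.sqrt ((k:ℝ) + 1) ≤ (k:ℝ) + 1 := by
        have h1 : Real.sqrt ((k:ℝ) + 1) ≤ Real.sqrt (((k:ℝ) + 1) ^ 2) :=
          Real.sqrt_le_sqrt (by nlinarith [Nat.cast_nonneg (α := ℝ) k])
        rwa [Real.sqrt_sq (by positivity)] at h1
      have hsub2 : {ω | X j ω ≤ ((k:ℝ) + 1) * t ^ 2}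
          ⊆ {ω | ‖Z ω j - u j‖ ≤ Real.sqrt ((k:ℝ) + 1) * t} := by
        intro ω hω
        simp only [Set.mem_setOf_eq] at hω ⊢
        have h1 : ‖Z ω j - u j‖ = Real.sqrt (X j ω) := by
          rw [hX]; rw [Real.sqrt_sq (norm_nonneg _)]
        rw [h1]
        calc Real.sqrt (X j ω) ≤ Real.sqrt (((k:ℝ) + 1) * t ^ 2) := Real.sqrt_le_sqrt hω
          _ = Real.sqrt ((k:ℝ) + 1) * t := by
              rw [Real.sqrt_mul (by positivity), Real.sqrt_sq htpos.le]
      calc P {ω | X j ω ≤ ((k:ℝ) + 1) * t ^ 2}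
          ≤ P {ω | ‖Z ω j - u j‖ ≤ Real.sqrt ((k:ℝ) + 1) * t} := measure_mono hsub2
        _ ≤ concFn P (fun ω => Z ω j) (Real.sqrt ((k:ℝ) + 1) * t) := by
            rw [concFn]
            exact le_iSup (fun v => P {ω | ‖Z ω j - v‖ ≤ Real.sqrt ((k:ℝ) + 1) * t}) (u j)
        _ ≤ ENNReal.ofReal (M * (Real.sqrt ((k:ℝ) + 1) * t + t₀)) := hconc j _ (by positivity)
        _ ≤ ENNReal.ofReal (M * (((k : ℝ) + 1) * (t + t₀))) := by
            refine ENNReal.ofReal_le_ofReal (mul_le_mul_of_nonneg_left ?_ hM)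
            have h1k : (1:ℝ) ≤ (k:ℝ) + 1 := by linarith [Nat.cast_nonneg (α := ℝ) k]
            nlinarith [mul_le_mul_of_nonneg_right hsq htpos.le]
    have hmgf_le : mgf (∑ j, X j) P s ≤ (4 * (M * (t + t₀))) ^ n := by
      rw [hiX.mgf_sum hXm Finset.univ]
      calc ∏ j, mgf (X j) P s ≤ ∏ _j : Fin n, (4 * (M * (t + t₀))) :=
            Finset.prod_le_prod (fun j _ => mgf_nonneg) (fun j _ => hcoord j)
        _ = (4 * (M * (t + t₀))) ^ n := by
            rw [Finset.prod_const, Finset.card_univ, Fintype.card_fin]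
    -- event inclusion
    have hsub : {ω | eNorm (fun i => Z ω i - u i) ≤ t * Real.sqrt n}
        ⊆ {ω | (∑ j, X j) ω ≤ (n:ℝ) * t ^ 2} := by
      intro ω hω
      simp only [Set.mem_setOf_eq] at hω ⊢
      rw [Finset.sum_apply]
      have h0 : 0 ≤ ∑ j, X j ω := Finset.sum_nonneg fun j _ => hX0 j ω
      have heq : eNorm (fun i => Z ω i - u i) = Real.sqrt (∑ j, X j ω) := rfl
      rw [heq] at hω
      have h2 : ∑ j, X j ω ≤ (t * Real.sqrt n) ^ 2 := by
        rw [← Real.sq_sqrt h0]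
        exact pow_le_pow_left₀ (Real.sqrt_nonneg _) hω 2
      calc ∑ j, X j ω ≤ (t * Real.sqrt n) ^ 2 := h2
        _ = (n:ℝ) * t ^ 2 := by
            rw [mul_pow, Real.sq_sqrt (Nat.cast_nonneg n)]; ring
    -- conclusion
    have hexp_eq : -s * ((n:ℝ) * t ^ 2) = (n:ℝ) := by
      rw [hs]; field_simp
    calc P {ω | eNorm (fun i => Z ω i - u i) ≤ t * Real.sqrt n}
        ≤ P {ω | (∑ j, X j) ω ≤ (n:ℝ) * t ^ 2} := measure_mono hsub
      _ ≤ ENNReal.ofReal ((4 * Real.exp 1 * M * (t + t₀)) ^ n) := by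
          rw [ENNReal.le_ofReal_iff_toReal_le (measure_ne_top P _) (by positivity)]
          calc (P {ω | (∑ j, X j) ω ≤ (n:ℝ) * t ^ 2}).toReal
              ≤ Real.exp (-s * ((n:ℝ) * t ^ 2)) * mgf (∑ j, X j) P s := hcher
            _ ≤ Real.exp (-s * ((n:ℝ) * t ^ 2)) * (4 * (M * (t + t₀))) ^ n :=
                mul_le_mul_of_nonneg_left hmgf_le (Real.exp_pos _).le
            _ = (4 * Real.exp 1 * M * (t + t₀)) ^ n := by
                rw [hexp_eq]
                rw [show ((n:ℝ)) = (n:ℝ) * 1 by ring, Real.exp_nat_mul, ← mul_pow]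
                congr 1
                ring
end
end

section
/- Let Z = X + iY be a random vector in ℂ^N whose imaginary part Y ∈ ℝ^N is fixed (deterministic). Let X₁ and X₂ be independent copies of X and set Ẑ = (X₁, X₂) ∈ ℝ^{2N}. Then for every complex subspace E ⊆ ℂ^N and every r ≥ 0, L(P_E Z, r) ≤ L(P_{real(E)} Ẑ, 2r)^{1/2}, where P_E and P_{real(E)} denote the orthogonal projections onto E and onto real(E) respectively. -/
open MeasureTheory ProbabilityTheory
open scoped ENNReal

noncomputable section

/-- The real form of a complex vector: `real(x + iy) = (x, y) ∈ ℝ^{2N}`. -/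
def realVec {N : ℕ} (z : EuclideanSpace ℂ (Fin N)) : EuclideanSpace ℝ (Fin N ⊕ Fin N) :=
  WithLp.toLp 2 (Sum.elim (fun i => (z i).re) (fun i => (z i).im))

lemma realVec_sub {N : ℕ} (a b : EuclideanSpace ℂ (Fin N)) :
    realVec (a - b) = realVec a - realVec b := by
  ext x; cases x <;> simp [realVec, Complex.sub_re, Complex.sub_im]

lemma inner_realVec {N : ℕ} (a b : EuclideanSpace ℂ (Fin N)) :
    (inner ℝ (realVec a) (realVec b) : ℝ) = (inner ℂ a b : ℂ).re := by
  simp only [PiLp.inner_apply, RCLike.inner_apply, realVec]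
  rw [Complex.re_sum, Fintype.sum_sum_type, ← Finset.sum_add_distrib]
  refine Finset.sum_congr rfl fun i _ => ?_
  simp [Complex.mul_re]

lemma norm_realVec {N : ℕ} (a : EuclideanSpace ℂ (Fin N)) : ‖realVec a‖ = ‖a‖ := by
  rw [EuclideanSpace.norm_eq, EuclideanSpace.norm_eq]
  congr 1
  rw [Fintype.sum_sum_type, ← Finset.sum_add_distrib]
  refine Finset.sum_congr rfl fun i _ => ?_
  simp [realVec, Real.norm_eq_abs, sq_abs, Complex.sq_norm,
    Complex.normSq_apply]
  ring

lemma realVec_mk {N : ℕ} (a b : Fin N → ℝ) :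
    realVec (WithLp.toLp 2 (fun i => (a i : ℂ) + (b i : ℂ) * Complex.I) : EuclideanSpace ℂ (Fin N))
      = WithLp.toLp 2 (Sum.elim a b) := by
  ext x; cases x <;> simp [realVec]

lemma realVec_proj {N : ℕ} (E : Submodule ℂ (EuclideanSpace ℂ (Fin N)))
    (F : Submodule ℝ (EuclideanSpace ℝ (Fin N ⊕ Fin N)))
    (hF : (F : Set (EuclideanSpace ℝ (Fin N ⊕ Fin N)))
      = realVec '' (E : Set (EuclideanSpace ℂ (Fin N))))
    (z : EuclideanSpace ℂ (Fin N)) :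
    realVec ((E.orthogonalProjection z : EuclideanSpace ℂ (Fin N)))
      = (F.orthogonalProjection (realVec z) : EuclideanSpace ℝ (Fin N ⊕ Fin N)) := by
  show realVec (E.starProjection z) = F.starProjection (realVec z)
  refine (F.eq_starProjection_of_mem_of_inner_eq_zero ?_ ?_).symm
  · have : (realVec ((E.orthogonalProjection z : EuclideanSpace ℂ (Fin N))))
        ∈ (F : Set (EuclideanSpace ℝ (Fin N ⊕ Fin N))) := by
      rw [hF]
      exact ⟨_, (E.orthogonalProjection z).2, rfl⟩
    exact this
  · intro w hw
    have hw' : w ∈ realVec '' (E : Set (EuclideanSpace ℂ (Fin N))) := by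
      rw [← hF]; exact hw
    obtain ⟨e, he, rfl⟩ := hw'
    rw [← realVec_sub, inner_realVec]
    have h0 : (inner ℂ (z - E.starProjection z) e : ℂ) = 0 :=
      Submodule.inner_left_of_mem_orthogonal he (E.sub_starProjection_mem_orthogonal z)
    rw [h0, Complex.zero_re]

/-- **Randomizing all coordinates** (Rudelson–Vershynin, Lemma 5.6).  If `Z = X + iY` has a
fixed imaginary part `Y`, `X₁, X₂` are independent copies of `X`, and `Ẑ = (X₁, X₂) ∈ ℝ^{2N}`,
then for every complex subspace `E ⊆ ℂ^N` (with real form `F = real(E) ⊆ ℝ^{2N}`) and `r ≥ 0`,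
`L(P_E Z, r) ≤ L(P_F Ẑ, 2r)^{1/2}`. -/
theorem randomize_all_coordinates
    (N : ℕ) (Ω : Type) [MeasurableSpace Ω] (P : Measure Ω) [IsProbabilityMeasure P]
    (X X₁ X₂ : Ω → Fin N → ℝ) (Y : Fin N → ℝ)
    (hX : Measurable X) (hX₁ : Measurable X₁) (hX₂ : Measurable X₂)
    (hindep : IndepFun X₁ X₂ P)
    (hcopy₁ : P.map X₁ = P.map X) (hcopy₂ : P.map X₂ = P.map X)
    (E : Submodule ℂ (EuclideanSpace ℂ (Fin N)))
    (F : Submodule ℝ (EuclideanSpace ℝ (Fin N ⊕ Fin N)))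
    (hF : (F : Set (EuclideanSpace ℝ (Fin N ⊕ Fin N))) = realVec '' (E : Set (EuclideanSpace ℂ (Fin N))))
    (r : ℝ) (hr : 0 ≤ r) :
    concFn P
        (fun ω => (E.orthogonalProjection
          (WithLp.toLp 2 (fun i => (X ω i : ℂ) + (Y i : ℂ) * Complex.I)) : EuclideanSpace ℂ (Fin N))) r ≤
      (concFn P
          (fun ω => (F.orthogonalProjection
            (WithLp.toLp 2 (Sum.elim (X₁ ω) (X₂ ω))) : EuclideanSpace ℝ (Fin N ⊕ Fin N))) (2 * r)) ^
        (1 / 2 : ℝ) := by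
  have hroot : ∀ x : ℝ≥0∞, (x * x) ^ (1 / 2 : ℝ) = x := by
    intro x
    rw [← pow_two, ← ENNReal.rpow_natCast, ← ENNReal.rpow_mul]
    norm_num
  set C : ℝ≥0∞ := concFn P
      (fun ω => (F.orthogonalProjection
        (WithLp.toLp 2 (Sum.elim (X₁ ω) (X₂ ω))) : EuclideanSpace ℝ (Fin N ⊕ Fin N))) (2 * r) with hC
  rw [concFn]
  refine iSup_le fun u => ?_
  set c₀ : EuclideanSpace ℂ (Fin N) := (WithLp.toLp 2 (fun i => (Complex.I - 1) * (Y i : ℂ))) with hc₀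
  set v : EuclideanSpace ℂ (Fin N) :=
    u + Complex.I • u - (E.orthogonalProjection c₀ : EuclideanSpace ℂ (Fin N)) with hv
  have hfc : Continuous (fun x : Fin N → ℝ =>
      (WithLp.toLp 2 (fun i => (x i : ℂ) + (Y i : ℂ) * Complex.I) : EuclideanSpace ℂ (Fin N))) :=
    (PiLp.continuous_toLp 2 (fun _ : Fin N => ℂ)).comp
      (continuous_pi fun i => ((Complex.continuous_ofReal.comp (continuous_apply i)).add
        continuous_const))
  have hgc : Continuous (fun x : Fin N → ℝ =>
      ((E.orthogonalProjection (WithLp.toLp 2 (fun i => (x i : ℂ) + (Y i : ℂ) * Complex.I))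
        : EuclideanSpace ℂ (Fin N)))) :=
    continuous_subtype_val.comp ((E.orthogonalProjection).continuous.comp hfc)
  set S : Set (Fin N → ℝ) := {x | ‖(E.orthogonalProjection
      (WithLp.toLp 2 (fun i => (x i : ℂ) + (Y i : ℂ) * Complex.I)) : EuclideanSpace ℂ (Fin N)) - u‖ ≤ r}
    with hSdef
  have hS : MeasurableSet S :=
    ((hgc.sub continuous_const).norm.measurable) measurableSet_Iic
  have e1 : P (X ⁻¹' S) = P (X₁ ⁻¹' S) := by
    rw [← Measure.map_apply hX hS, ← Measure.map_apply hX₁ hS, hcopy₁]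
  have e2 : P (X ⁻¹' S) = P (X₂ ⁻¹' S) := by
    rw [← Measure.map_apply hX hS, ← Measure.map_apply hX₂ hS, hcopy₂]
  have key : X₁ ⁻¹' S ∩ X₂ ⁻¹' S ⊆ {ω | ‖(F.orthogonalProjection
      (WithLp.toLp 2 (Sum.elim (X₁ ω) (X₂ ω))) : EuclideanSpace ℝ (Fin N ⊕ Fin N)) - realVec v‖ ≤ 2 * r} := by
    rintro ω ⟨h₁, h₂⟩
    have h₁' : ‖(E.orthogonalProjection
        (WithLp.toLp 2 (fun i => (X₁ ω i : ℂ) + (Y i : ℂ) * Complex.I)) : EuclideanSpace ℂ (Fin N)) - u‖ ≤ r := h₁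
    have h₂' : ‖(E.orthogonalProjection
        (WithLp.toLp 2 (fun i => (X₂ ω i : ℂ) + (Y i : ℂ) * Complex.I)) : EuclideanSpace ℂ (Fin N)) - u‖ ≤ r := h₂
    set z₁ : EuclideanSpace ℂ (Fin N) := (WithLp.toLp 2 (fun i => (X₁ ω i : ℂ) + (Y i : ℂ) * Complex.I)) with hz₁
    set z₂ : EuclideanSpace ℂ (Fin N) := (WithLp.toLp 2 (fun i => (X₂ ω i : ℂ) + (Y i : ℂ) * Complex.I)) with hz₂
    have hz : (WithLp.toLp 2 (fun i => (X₁ ω i : ℂ) + (X₂ ω i : ℂ) * Complex.I) : EuclideanSpace ℂ (Fin N))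
        = z₁ + Complex.I • z₂ - c₀ := by
      ext i
      simp only [hz₁, hz₂, hc₀, PiLp.add_apply, PiLp.sub_apply, PiLp.smul_apply, smul_eq_mul]
      linear_combination (-(Y i : ℂ)) * Complex.I_mul_I
    have hproj : (F.orthogonalProjection
          (WithLp.toLp 2 (Sum.elim (X₁ ω) (X₂ ω))) : EuclideanSpace ℝ (Fin N ⊕ Fin N))
        = realVec ((E.orthogonalProjection (z₁ + Complex.I • z₂ - c₀)
            : EuclideanSpace ℂ (Fin N))) := by
      rw [realVec_proj E F hF, ← hz, realVec_mk]
    have hdecomp : (E.orthogonalProjection (z₁ + Complex.I • z₂ - c₀)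
          : EuclideanSpace ℂ (Fin N)) - v
        = ((E.orthogonalProjection z₁ : EuclideanSpace ℂ (Fin N)) - u)
          + Complex.I • ((E.orthogonalProjection z₂ : EuclideanSpace ℂ (Fin N)) - u) := by
      rw [hv]
      simp only [map_add, map_sub, _root_.map_smul, Submodule.coe_add, Submodule.coe_sub,
        Submodule.coe_smul, smul_sub]
      abel
    show ‖(F.orthogonalProjection
      (WithLp.toLp 2 (Sum.elim (X₁ ω) (X₂ ω))) : EuclideanSpace ℝ (Fin N ⊕ Fin N)) - realVec v‖ ≤ 2 * r
    rw [hproj, ← realVec_sub, norm_realVec, hdecomp]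
    calc ‖((E.orthogonalProjection z₁ : EuclideanSpace ℂ (Fin N)) - u)
          + Complex.I • ((E.orthogonalProjection z₂ : EuclideanSpace ℂ (Fin N)) - u)‖
        ≤ ‖(E.orthogonalProjection z₁ : EuclideanSpace ℂ (Fin N)) - u‖
          + ‖Complex.I • ((E.orthogonalProjection z₂ : EuclideanSpace ℂ (Fin N)) - u)‖ :=
          norm_add_le _ _
      _ ≤ r + r := by
          rw [norm_smul]
          simp only [Complex.norm_I, one_mul]
          exact add_le_add h₁' h₂'
      _ = 2 * r := by ring
  have hsq : P (X ⁻¹' S) * P (X ⁻¹' S) ≤ C := by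
    calc P (X ⁻¹' S) * P (X ⁻¹' S)
        = P (X₁ ⁻¹' S ∩ X₂ ⁻¹' S) := by
          rw [hindep.measure_inter_preimage_eq_mul S S hS hS, ← e1, ← e2]
      _ ≤ P {ω | ‖(F.orthogonalProjection
            (WithLp.toLp 2 (Sum.elim (X₁ ω) (X₂ ω))) : EuclideanSpace ℝ (Fin N ⊕ Fin N)) - realVec v‖ ≤ 2 * r} :=
          measure_mono key
      _ ≤ C :=
          le_iSup (fun w : EuclideanSpace ℝ (Fin N ⊕ Fin N) => P {ω | ‖(F.orthogonalProjection
            (WithLp.toLp 2 (Sum.elim (X₁ ω) (X₂ ω))) : EuclideanSpace ℝ (Fin N ⊕ Fin N)) - w‖ ≤ 2 * r})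
            (realVec v)
  show P (X ⁻¹' S) ≤ C ^ (1 / 2 : ℝ)
  rw [← hroot (P (X ⁻¹' S))]
  exact ENNReal.rpow_le_rpow hsq (by norm_num)
end
end

section
/- There exist constants c, c' > 0 depending only on p and K such that the following holds. Let ξ₁,…,ξ_N be independent real random variables, each satisfying sup_{u∈ℝ} P(|ξ_k − u| ≤ 1) ≤ 1−p and P(|ξ_k| > K) ≤ p/2, and let a₁,…,a_N be real numbers with Σ_{k=1}^N a_k² = 1. Then L( Σ_{k=1}^N a_k ξ_k, c ) ≤ 1 − c'. -/
open MeasureTheory ProbabilityTheory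
open scoped ENNReal

noncomputable section

open Finset

def rad (b : Bool) : ℝ := if b then 1 else -1

lemma rad_mul_self (b : Bool) : rad b * rad b = 1 := by cases b <;> norm_num [rad]

lemma rad_sq (b : Bool) : rad b ^ 2 = 1 := by rw [sq, rad_mul_self]

lemma rad_not (b : Bool) : rad (!b) = - rad b := by cases b <;> simp [rad]

variable {ι : Type} [Fintype ι] [DecidableEq ι]

lemma sum_rad_mul (k : ι) (g : (ι → Bool) → ℝ)
    (hg : ∀ s v, g (Function.update s k v) = g s) :
    ∑ s : ι → Bool, rad (s k) * g s = 0 := by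
  apply Finset.sum_ninvolution (fun s => Function.update s k (!s k))
  · intro s
    have h1 : Function.update s k (!s k) k = !s k := by simp
    rw [h1, hg, rad_not]
    ring
  · intro s _
    intro h
    have := congrFun h k
    simp at this
  · intro s; exact Finset.mem_univ _
  · intro s
    funext j
    by_cases hj : j = k
    · subst hj; simp
    · simp [Function.update_of_ne hj]

omit [Fintype ι] in
lemma update_sum_eq (A : Finset ι) (k : ι) (hk : k ∉ A) (b : ι → ℝ) (s : ι → Bool) (v : Bool) :
    (∑ j ∈ A, rad (Function.update s k v j) * b j) = ∑ j ∈ A, rad (s j) * b j := by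
  refine Finset.sum_congr rfl fun j hj => ?_
  have : j ≠ k := fun h => hk (h ▸ hj)
  rw [Function.update_of_ne this]

lemma sum_rad_sq (b : ι → ℝ) (A : Finset ι) :
    ∑ s : ι → Bool, (∑ k ∈ A, rad (s k) * b k) ^ 2
      = (Fintype.card (ι → Bool) : ℝ) * ∑ k ∈ A, b k ^ 2 := by
  classical
  induction A using Finset.induction_on with
  | empty => simp
  | @insert k A hk ih =>
    have hcross : ∑ s : ι → Bool,
        rad (s k) * (2 * b k * (∑ j ∈ A, rad (s j) * b j)) = 0 :=
      sum_rad_mul k _ (fun s v => by rw [update_sum_eq A k hk])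
    calc ∑ s : ι → Bool, (∑ j ∈ insert k A, rad (s j) * b j) ^ 2
        = ∑ s : ι → Bool, (b k ^ 2 + rad (s k) * (2 * b k * (∑ j ∈ A, rad (s j) * b j))
            + (∑ j ∈ A, rad (s j) * b j) ^ 2) := by
          refine Finset.sum_congr rfl fun s _ => ?_
          rw [Finset.sum_insert hk]
          linear_combination (b k) ^ 2 * rad_sq (s k)
      _ = ∑ s : ι → Bool, (b k ^ 2 : ℝ)
            + ∑ s : ι → Bool, rad (s k) * (2 * b k * (∑ j ∈ A, rad (s j) * b j))
            + ∑ s : ι → Bool, (∑ j ∈ A, rad (s j) * b j) ^ 2 := by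
          rw [Finset.sum_add_distrib, Finset.sum_add_distrib]
      _ = (Fintype.card (ι → Bool) : ℝ) * ∑ j ∈ insert k A, b j ^ 2 := by
          rw [hcross, ih, Finset.sum_const, nsmul_eq_mul, Finset.card_univ,
            Finset.sum_insert hk]
          ring

lemma sum_rad_pow4 (b : ι → ℝ) (A : Finset ι) :
    ∑ s : ι → Bool, (∑ k ∈ A, rad (s k) * b k) ^ 4
      ≤ 3 * (Fintype.card (ι → Bool) : ℝ) * (∑ k ∈ A, b k ^ 2) ^ 2 := by
  classical
  induction A using Finset.induction_on with
  | empty =>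
    simp
  | @insert k A hk ih =>
    set M : ℝ := (Fintype.card (ι → Bool) : ℝ) with hM
    have hM0 : (0:ℝ) ≤ M := by positivity
    have hcross : ∑ s : ι → Bool,
        rad (s k) * (4 * b k ^ 3 * (∑ j ∈ A, rad (s j) * b j)
          + 4 * b k * (∑ j ∈ A, rad (s j) * b j) ^ 3) = 0 :=
      sum_rad_mul k _ (fun s v => by rw [update_sum_eq A k hk])
    have hsum : ∑ s : ι → Bool, (∑ j ∈ insert k A, rad (s j) * b j) ^ 4
        = M * b k ^ 4 + 6 * b k ^ 2 * (M * ∑ j ∈ A, b j ^ 2)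
          + ∑ s : ι → Bool, (∑ j ∈ A, rad (s j) * b j) ^ 4 := by
      calc ∑ s : ι → Bool, (∑ j ∈ insert k A, rad (s j) * b j) ^ 4
          = ∑ s : ι → Bool, (b k ^ 4 + 6 * b k ^ 2 * (∑ j ∈ A, rad (s j) * b j) ^ 2
              + rad (s k) * (4 * b k ^ 3 * (∑ j ∈ A, rad (s j) * b j)
                + 4 * b k * (∑ j ∈ A, rad (s j) * b j) ^ 3)
              + (∑ j ∈ A, rad (s j) * b j) ^ 4) := by
            refine Finset.sum_congr rfl fun s _ => ?_
            rw [Finset.sum_insert hk]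
            linear_combination ((b k) ^ 4 * (rad (s k) ^ 2 + 1)
              + 4 * (b k) ^ 3 * (∑ j ∈ A, rad (s j) * b j) * rad (s k)
              + 6 * (b k) ^ 2 * (∑ j ∈ A, rad (s j) * b j) ^ 2) * rad_sq (s k)
        _ = ∑ s : ι → Bool, (b k ^ 4 : ℝ)
              + ∑ s : ι → Bool, 6 * b k ^ 2 * (∑ j ∈ A, rad (s j) * b j) ^ 2
              + ∑ s : ι → Bool, rad (s k) * (4 * b k ^ 3 * (∑ j ∈ A, rad (s j) * b j)
                + 4 * b k * (∑ j ∈ A, rad (s j) * b j) ^ 3)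
              + ∑ s : ι → Bool, (∑ j ∈ A, rad (s j) * b j) ^ 4 := by
            rw [Finset.sum_add_distrib, Finset.sum_add_distrib, Finset.sum_add_distrib]
        _ = M * b k ^ 4 + 6 * b k ^ 2 * (M * ∑ j ∈ A, b j ^ 2)
              + ∑ s : ι → Bool, (∑ j ∈ A, rad (s j) * b j) ^ 4 := by
            rw [hcross, Finset.sum_const, nsmul_eq_mul, Finset.card_univ,
              ← Finset.mul_sum, sum_rad_sq]
            ring
    rw [hsum, Finset.sum_insert hk]
    have hb2 : (0:ℝ) ≤ ∑ j ∈ A, b j ^ 2 := Finset.sum_nonneg fun j _ => sq_nonneg _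
    nlinarith [ih, mul_nonneg hM0 (sq_nonneg (b k ^ 2)), mul_nonneg hM0 (sq_nonneg (b k))]

lemma count_small_le (b : ι → ℝ) (t : ℝ) (ht0 : 0 ≤ t)
    (ht : t ^ 2 < (∑ k, b k ^ 2) / 4) :
    16 * (((Finset.univ : Finset (ι → Bool)).filter
        (fun s => |∑ k, rad (s k) * b k| ≤ t)).card : ℝ)
      ≤ 13 * (Fintype.card (ι → Bool) : ℝ) := by
  classical
  set σ2 : ℝ := ∑ k, b k ^ 2 with hσ2
  set M : ℝ := (Fintype.card (ι → Bool) : ℝ) with hMdef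
  have hMpos : (0:ℝ) < M := by
    have : 0 < Fintype.card (ι → Bool) := Fintype.card_pos
    rw [hMdef]
    exact_mod_cast this
  have ht2 : (0:ℝ) ≤ t ^ 2 := sq_nonneg t
  have hσpos : 0 < σ2 := by nlinarith
  set X : (ι → Bool) → ℝ := fun s => ∑ k, rad (s k) * b k with hX
  set big : Finset (ι → Bool) := Finset.univ.filter (fun s => σ2 / 4 ≤ X s ^ 2) with hbig
  have hm2 : ∑ s : ι → Bool, X s ^ 2 = M * σ2 := sum_rad_sq b Finset.univ
  have hm4 : ∑ s : ι → Bool, X s ^ 4 ≤ 3 * M * σ2 ^ 2 := sum_rad_pow4 b Finset.univ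
  have hsplit := Finset.sum_filter_add_sum_filter_not Finset.univ
    (fun s => σ2 / 4 ≤ X s ^ 2) (fun s => X s ^ 2)
  have hsmall : ∑ s ∈ Finset.univ.filter (fun s => ¬ σ2 / 4 ≤ X s ^ 2), X s ^ 2
      ≤ M * (σ2 / 4) := by
    calc ∑ s ∈ Finset.univ.filter (fun s => ¬ σ2 / 4 ≤ X s ^ 2), X s ^ 2
        ≤ ∑ _s ∈ Finset.univ.filter (fun s => ¬ σ2 / 4 ≤ X s ^ 2), (σ2 / 4) := by
          refine Finset.sum_le_sum fun s hs => ?_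
          have := (Finset.mem_filter.mp hs).2
          linarith [lt_of_not_ge this]
      _ = ((Finset.univ.filter (fun s => ¬ σ2 / 4 ≤ X s ^ 2)).card : ℝ) * (σ2 / 4) := by
          rw [Finset.sum_const, nsmul_eq_mul]
      _ ≤ M * (σ2 / 4) := by
          have hle : ((Finset.univ.filter (fun s => ¬ σ2 / 4 ≤ X s ^ 2)).card : ℝ) ≤ M := by
            rw [hMdef]
            exact_mod_cast Finset.card_le_card (Finset.filter_subset _ _)
          nlinarith
  have hbig_sum : (3/4) * M * σ2 ≤ ∑ s ∈ big, X s ^ 2 := by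
    have heq : ∑ s ∈ big, X s ^ 2 = M * σ2
        - ∑ s ∈ Finset.univ.filter (fun s => ¬ σ2 / 4 ≤ X s ^ 2), X s ^ 2 := by
      rw [← hm2, ← hsplit]; ring
    rw [heq]; linarith
  have hCS : (∑ s ∈ big, X s ^ 2) ^ 2 ≤ (big.card : ℝ) * ∑ s ∈ big, (X s ^ 2) ^ 2 :=
    sq_sum_le_card_mul_sum_sq
  have hsum4 : ∑ s ∈ big, (X s ^ 2) ^ 2 ≤ 3 * M * σ2 ^ 2 := by
    refine le_trans ?_ hm4
    have hpow : ∀ s : ι → Bool, (X s ^ 2) ^ 2 = X s ^ 4 := fun s => by ring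
    simp_rw [hpow]
    exact Finset.sum_le_sum_of_subset_of_nonneg (Finset.subset_univ _)
      (fun s _ _ => by positivity)
  have hcard_big : (3/16) * M ≤ (big.card : ℝ) := by
    have hcard0 : (0:ℝ) ≤ (big.card : ℝ) := by positivity
    have h1 : ((3/4) * M * σ2) ^ 2 ≤ (big.card : ℝ) * (3 * M * σ2 ^ 2) := by
      calc ((3/4) * M * σ2) ^ 2 ≤ (∑ s ∈ big, X s ^ 2) ^ 2 :=
            pow_le_pow_left₀ (by positivity) hbig_sum 2
        _ ≤ (big.card : ℝ) * ∑ s ∈ big, (X s ^ 2) ^ 2 := hCS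
        _ ≤ (big.card : ℝ) * (3 * M * σ2 ^ 2) := by nlinarith [hsum4]
    nlinarith [h1, mul_pos hMpos (pow_pos hσpos 2), mul_pos (mul_pos hMpos hMpos) (pow_pos hσpos 2)]
  have hsub : Finset.univ.filter (fun s : ι → Bool => |X s| ≤ t)
      ⊆ Finset.univ.filter (fun s => ¬ σ2 / 4 ≤ X s ^ 2) := by
    intro s hs
    rw [Finset.mem_filter] at hs ⊢
    refine ⟨hs.1, ?_⟩
    have habs := hs.2
    have hsq : X s ^ 2 ≤ t ^ 2 := by
      rw [← sq_abs]
      exact pow_le_pow_left₀ (abs_nonneg _) habs 2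
    intro hcon
    linarith
  have hcompl : ((Finset.univ.filter (fun s => ¬ σ2 / 4 ≤ X s ^ 2)).card : ℝ)
      ≤ M - (3/16) * M := by
    have hadd := Finset.card_filter_add_card_filter_not
      (s := (Finset.univ : Finset (ι → Bool))) (p := fun s => σ2 / 4 ≤ X s ^ 2)
    have hsumcard : ((Finset.univ.filter (fun s => σ2 / 4 ≤ X s ^ 2)).card : ℝ)
        + ((Finset.univ.filter (fun s => ¬ σ2 / 4 ≤ X s ^ 2)).card : ℝ) = M := by
      rw [hMdef, ← Finset.card_univ]
      exact_mod_cast hadd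
    have hbigcard : (3/16) * M
        ≤ ((Finset.univ.filter (fun s => σ2 / 4 ≤ X s ^ 2)).card : ℝ) := hcard_big
    linarith
  have hfinal : ((Finset.univ.filter (fun s : ι → Bool => |X s| ≤ t)).card : ℝ)
      ≤ M - (3/16) * M := by
    refine le_trans ?_ hcompl
    exact_mod_cast Finset.card_le_card hsub
  linarith

lemma pi_cyl {N : ℕ} (ν : Fin N → Measure (ℝ × ℝ)) [∀ k, IsProbabilityMeasure (ν k)]
    (k : Fin N) (E : Set (ℝ × ℝ)) (_hE : MeasurableSet E) :
    Measure.pi ν ((fun y : Fin N → ℝ × ℝ => y k) ⁻¹' E) = ν k E := by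
  classical
  have hset : (fun y : Fin N → ℝ × ℝ => y k) ⁻¹' E
      = Set.pi Set.univ (fun j => if j = k then E else Set.univ) := by
    ext y
    simp only [Set.mem_preimage, Set.mem_pi, Set.mem_univ, true_implies]
    constructor
    · intro h j
      by_cases hj : j = k
      · subst hj; simpa using h
      · simp [hj]
    · intro h
      have := h k
      simpa using this
  rw [hset, Measure.pi_pi]
  rw [Finset.prod_eq_single k (fun j _ hj => by simp [hj]) (by simp)]
  simp

/-- **Small ball probabilities: a simple bound** (Rudelson–Vershynin, Lemma 7.8). -/
theorem small_ball_simple_bound (p K : ℝ) (hp : 0 < p) (hK : 0 < K) :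
    ∃ c c' : ℝ, 0 < c ∧ 0 < c' ∧
      ∀ (N : ℕ) (Ω : Type) (_ : MeasurableSpace Ω) (P : Measure Ω),
        IsProbabilityMeasure P →
        ∀ ξ : Ω → Fin N → ℝ,
          (∀ k, Measurable fun ω => ξ ω k) →
          iIndepFun (fun k ω => ξ ω k) P →
          (∀ (k : Fin N) (u : ℝ), P {ω | |ξ ω k - u| ≤ 1} ≤ ENNReal.ofReal (1 - p)) →
          (∀ k : Fin N, P {ω | K < |ξ ω k|} ≤ ENNReal.ofReal (p / 2)) →
          ∀ a : Fin N → ℝ, (∑ k, a k ^ 2) = 1 →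
            concFn P (fun ω => ∑ k, a k * ξ ω k) c ≤ ENNReal.ofReal (1 - c') := by
  classical
  set p' : ℝ := min p 1 with hp'def
  have hp'0 : 0 < p' := lt_min hp one_pos
  have hp'1 : p' ≤ 1 := min_le_right _ _
  set c : ℝ := Real.sqrt p' / 8 with hcdef
  set r : ℝ := 1 - 3 * p' / 32 with hrdef
  have hr0 : 0 < r := by rw [hrdef]; nlinarith
  have hr1 : r < 1 := by rw [hrdef]; nlinarith
  set c' : ℝ := 1 - Real.sqrt r with hc'def
  have hc0 : 0 < c := by
    rw [hcdef]
    have := Real.sqrt_pos.mpr hp'0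
    positivity
  have hc'0 : 0 < c' := by
    rw [hc'def]
    have : Real.sqrt r < 1 := by
      have := Real.sqrt_lt_sqrt hr0.le hr1
      simpa using this
    linarith
  have hsqrt_r : Real.sqrt r = 1 - c' := by rw [hc'def]; ring
  have hcsq : c ^ 2 = p' / 64 := by
    rw [hcdef, div_pow, Real.sq_sqrt hp'0.le]
    norm_num
  refine ⟨c, c', hc0, hc'0, ?_⟩
  intro N Ω mΩ P hP ξ hmeas hInd hball htail a ha
  -- the one-dimensional laws
  set μ : Fin N → Measure ℝ := fun k => P.map (fun ω => ξ ω k) with hμdef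
  haveI : ∀ k, IsProbabilityMeasure (μ k) := fun k =>
    Measure.isProbabilityMeasure_map (hmeas k).aemeasurable
  have hμball : ∀ (k : Fin N) (u : ℝ), μ k {x | |x - u| ≤ 1} ≤ ENNReal.ofReal (1 - p') := by
    intro k u
    have hset : MeasurableSet {x : ℝ | |x - u| ≤ 1} :=
      measurableSet_le ((measurable_id.sub_const u).abs) measurable_const
    rw [hμdef, Measure.map_apply (hmeas k) hset]
    refine le_trans (hball k u) (ENNReal.ofReal_le_ofReal ?_)
    have := min_le_left p 1
    simp only [hp'def]
    linarith [min_le_left p 1]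
  -- the symmetrized product space
  set ρk : Fin N → Measure (ℝ × ℝ) := fun k => (μ k).prod (μ k) with hρkdef
  haveI : ∀ k, IsProbabilityMeasure (ρk k) := fun k => by
    rw [hρkdef]; infer_instance
  set ρ : Measure (Fin N → ℝ × ℝ) := Measure.pi ρk with hρdef
  haveI : IsProbabilityMeasure ρ := by rw [hρdef]; infer_instance
  set D : (Fin N → ℝ × ℝ) → Fin N → ℝ := fun y k => (y k).1 - (y k).2 with hDdef
  have hDmeas : ∀ k, Measurable fun y => D y k := fun k =>
    (measurable_fst.comp (measurable_pi_apply k)).sub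
      (measurable_snd.comp (measurable_pi_apply k))
  -- tail bound for the symmetrized variables
  have hηtail : ∀ k : Fin N, ENNReal.ofReal p' ≤ ρ {y | 1 < |D y k|} := by
    intro k
    have hset1 : MeasurableSet {z : ℝ × ℝ | |z.1 - z.2| ≤ 1} :=
      measurableSet_le ((measurable_fst.sub measurable_snd).abs) measurable_const
    have hprodle : ρk k {z : ℝ × ℝ | |z.1 - z.2| ≤ 1} ≤ ENNReal.ofReal (1 - p') := by
      rw [hρkdef]
      rw [Measure.prod_apply hset1]
      have hbd : ∀ x : ℝ, μ k (Prod.mk x ⁻¹' {z : ℝ × ℝ | |z.1 - z.2| ≤ 1})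
          ≤ ENNReal.ofReal (1 - p') := by
        intro x
        have hpre2 : Prod.mk x ⁻¹' {z : ℝ × ℝ | |z.1 - z.2| ≤ 1} = {w : ℝ | |w - x| ≤ 1} := by
          ext w
          simp only [Set.mem_preimage, Set.mem_setOf_eq]
          rw [abs_sub_comm]
        rw [hpre2]
        exact hμball k x
      calc ∫⁻ x, μ k (Prod.mk x ⁻¹' {z : ℝ × ℝ | |z.1 - z.2| ≤ 1}) ∂ μ k
          ≤ ∫⁻ _, ENNReal.ofReal (1 - p') ∂ μ k := lintegral_mono hbd
        _ = ENNReal.ofReal (1 - p') := by simp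
    have hcompl : {y : Fin N → ℝ × ℝ | 1 < |D y k|}
        = (fun y : Fin N → ℝ × ℝ => y k) ⁻¹' ({z : ℝ × ℝ | |z.1 - z.2| ≤ 1}ᶜ) := by
      ext y
      simp [hDdef, not_le]
    rw [hcompl, hρdef, pi_cyl ρk k _ hset1.compl, prob_compl_eq_one_sub hset1]
    have hofd : ENNReal.ofReal p' = 1 - ENNReal.ofReal (1 - p') := by
      rw [← ENNReal.ofReal_one, ← ENNReal.ofReal_sub 1 (by linarith : (0:ℝ) ≤ 1 - p')]
      norm_num
    rw [hofd]
    exact tsub_le_tsub_left hprodle 1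
  -- good event
  set Z : (Fin N → ℝ × ℝ) → ℝ := fun y => ∑ k, if 1 < |D y k| then a k ^ 2 else 0 with hZdef
  have hZmeas : Measurable Z := by
    refine Finset.measurable_sum _ fun k _ => Measurable.ite ?_ measurable_const measurable_const
    exact measurableSet_lt measurable_const (hDmeas k).abs
  set G : Set (Fin N → ℝ × ℝ) := {y | p' / 2 ≤ Z y} with hGdef
  have hGmeas : MeasurableSet G := measurableSet_le measurable_const hZmeas
  have hDset : ∀ k : Fin N, MeasurableSet {y : Fin N → ℝ × ℝ | 1 < |D y k|} :=
    fun k => measurableSet_lt measurable_const (hDmeas k).abs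
  have hGprob : ENNReal.ofReal (p' / 2) ≤ ρ G := by
    have hZsum : ∀ y, ENNReal.ofReal (Z y)
        = ∑ k, Set.indicator {y' : Fin N → ℝ × ℝ | 1 < |D y' k|}
            (fun _ => ENNReal.ofReal (a k ^ 2)) y := by
      intro y
      rw [hZdef, ENNReal.ofReal_sum_of_nonneg (fun k _ => by
        split_ifs
        exacts [sq_nonneg _, le_rfl])]
      refine Finset.sum_congr rfl fun k _ => ?_
      by_cases h : 1 < |D y k| <;>
        simp [Set.indicator_apply, h]
    have hint : ∫⁻ y, ENNReal.ofReal (Z y) ∂ρ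
        = ∑ k, ENNReal.ofReal (a k ^ 2) * ρ {y | 1 < |D y k|} := by
      simp_rw [hZsum]
      rw [lintegral_finset_sum _ (fun k _ => measurable_const.indicator (hDset k))]
      exact Finset.sum_congr rfl fun k _ => lintegral_indicator_const (hDset k) _
    have hlower : ENNReal.ofReal p' ≤ ∫⁻ y, ENNReal.ofReal (Z y) ∂ρ := by
      rw [hint]
      calc ENNReal.ofReal p' = ∑ k, ENNReal.ofReal (a k ^ 2) * ENNReal.ofReal p' := by
            rw [← Finset.sum_mul, ← ENNReal.ofReal_sum_of_nonneg (fun k _ => sq_nonneg _), ha,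
              ENNReal.ofReal_one, one_mul]
        _ ≤ _ := Finset.sum_le_sum fun k _ => mul_le_mul_right (hηtail k) _
    have hupper : ∫⁻ y, ENNReal.ofReal (Z y) ∂ρ ≤ ρ G + ENNReal.ofReal (p' / 2) := by
      have hptw : ∀ y, ENNReal.ofReal (Z y)
          ≤ G.indicator (fun _ => (1 : ℝ≥0∞)) y + ENNReal.ofReal (p' / 2) := by
        intro y
        by_cases hy : y ∈ G
        · have hZ1 : Z y ≤ 1 := by
            rw [hZdef, ← ha]
            refine Finset.sum_le_sum fun k _ => ?_
            split_ifs
            exacts [le_rfl, sq_nonneg _]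
          calc ENNReal.ofReal (Z y) ≤ 1 := by
                simpa using ENNReal.ofReal_le_ofReal hZ1
            _ ≤ _ := by
                rw [Set.indicator_of_mem hy]
                exact le_add_right le_rfl
        · have hZs : Z y ≤ p' / 2 := by
            have := hy
            simp only [hGdef, Set.mem_setOf_eq, not_le] at this
            exact this.le
          calc ENNReal.ofReal (Z y) ≤ ENNReal.ofReal (p' / 2) := ENNReal.ofReal_le_ofReal hZs
            _ ≤ _ := le_add_self
      calc ∫⁻ y, ENNReal.ofReal (Z y) ∂ρ
          ≤ ∫⁻ y, (G.indicator (fun _ => (1 : ℝ≥0∞)) y + ENNReal.ofReal (p' / 2)) ∂ρ :=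
            lintegral_mono hptw
        _ = ρ G + ENNReal.ofReal (p' / 2) := by
            rw [lintegral_add_left (measurable_const.indicator hGmeas),
              lintegral_indicator_const hGmeas, lintegral_const, measure_univ, one_mul, mul_one]
    have hcomb := le_trans hlower hupper
    have h2 : ENNReal.ofReal p' - ENNReal.ofReal (p' / 2) ≤ ρ G := tsub_le_iff_right.mpr hcomb
    rwa [← ENNReal.ofReal_sub p' (by positivity), show p' - p' / 2 = p' / 2 by ring] at h2
  -- the symmetrized small ball estimate
  set Bη : Set (Fin N → ℝ × ℝ) := {y | |∑ k, a k * D y k| ≤ 2 * c} with hBηdef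
  have hBηmeas : MeasurableSet Bη := by
    refine measurableSet_le (Measurable.abs ?_) measurable_const
    exact Finset.measurable_sum _ fun k _ => (hDmeas k).const_mul (a k)
  have hBη : ρ Bη ≤ ENNReal.ofReal r := by
    set As : (Fin N → Bool) → Set (Fin N → ℝ × ℝ) :=
      fun s => {y | |∑ k, rad (s k) * (a k * D y k)| ≤ 2 * c} with hAsdef
    have hAsmeas : ∀ s, MeasurableSet (As s) := fun s =>
      measurableSet_le (Measurable.abs (Finset.measurable_sum _ fun k _ =>
        ((hDmeas k).const_mul (a k)).const_mul (rad (s k)))) measurable_const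
    have hflip : ∀ s : Fin N → Bool, ρ (As s) = ρ Bη := by
      intro s
      have hmp : MeasurePreserving
          (fun y : Fin N → ℝ × ℝ => fun k => if s k then y k else Prod.swap (y k)) ρ ρ := by
        rw [hρdef]
        refine measurePreserving_pi ρk ρk (f := fun k z => if s k then z else Prod.swap z) (fun k => ?_)
        by_cases h : s k
        · simp only [h, if_true]
          exact MeasurePreserving.id (ρk k)
        · simp only [h, if_false]
          exact (Measure.measurePreserving_swap : MeasurePreserving Prod.swap ((μ k).prod (μ k)) _)
      have hpre : (fun y : Fin N → ℝ × ℝ => fun k => if s k then y k else Prod.swap (y k)) ⁻¹' Bη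
          = As s := by
        ext y
        simp only [Set.mem_preimage, hBηdef, hAsdef, Set.mem_setOf_eq, hDdef]
        have hsumeq : (∑ k, a k * ((if s k then y k else Prod.swap (y k)).1
              - (if s k then y k else Prod.swap (y k)).2))
            = ∑ k, rad (s k) * (a k * ((y k).1 - (y k).2)) := by
          refine Finset.sum_congr rfl fun k _ => ?_
          by_cases h : s k <;> simp [h, rad, Prod.swap] <;> ring
        rw [hsumeq]
      rw [← hpre, hmp.measure_preimage hBηmeas.nullMeasurableSet]
    -- average over sign patterns
    have hsum_meas : ρ Bη * (Fintype.card (Fin N → Bool) : ℝ≥0∞)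
        = ∑ s : Fin N → Bool, ρ (As s) := by
      rw [Finset.sum_congr rfl fun s _ => hflip s, Finset.sum_const, Finset.card_univ,
        nsmul_eq_mul, mul_comm]
    have hswap : ∑ s : Fin N → Bool, ρ (As s)
        = ∫⁻ y, ∑ s : Fin N → Bool, Set.indicator (As s) (fun _ => (1 : ℝ≥0∞)) y ∂ρ := by
      rw [lintegral_finset_sum _ (fun s _ => measurable_const.indicator (hAsmeas s))]
      exact Finset.sum_congr rfl fun s _ => by
        rw [lintegral_indicator_const (hAsmeas s), one_mul]
    -- pointwise bound via the counting lemma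
    have hptw : ∀ y, (∑ s : Fin N → Bool, Set.indicator (As s) (fun _ => (1 : ℝ≥0∞)) y) * 16
        + (Fintype.card (Fin N → Bool) : ℝ≥0∞) * 3 * G.indicator (fun _ => (1 : ℝ≥0∞)) y
        ≤ (Fintype.card (Fin N → Bool) : ℝ≥0∞) * 16 := by
      intro y
      have hcount : (∑ s : Fin N → Bool, Set.indicator (As s) (fun _ => (1 : ℝ≥0∞)) y)
          = ((Finset.univ.filter
              (fun s : Fin N → Bool => |∑ k, rad (s k) * (a k * D y k)| ≤ 2 * c)).card : ℝ≥0∞) := by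
        rw [← Finset.sum_boole]
        refine Finset.sum_congr rfl fun s _ => ?_
        by_cases h : y ∈ As s
        · have h' : |∑ k, rad (s k) * (a k * D y k)| ≤ 2 * c := h
          simp [Set.indicator_of_mem h, h']
        · have h' : ¬ |∑ k, rad (s k) * (a k * D y k)| ≤ 2 * c := h
          simp [Set.indicator_of_notMem h, h']
      rw [hcount]
      by_cases hy : y ∈ G
      · -- on the good event, use the counting lemma
        have hZy : p' / 2 ≤ Z y := hy
        have hσ : p' / 2 ≤ ∑ k, (a k * D y k) ^ 2 := by
          refine le_trans hZy ?_
          rw [hZdef]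
          refine Finset.sum_le_sum fun k _ => ?_
          split_ifs with h
          · have h2 : 1 ≤ (D y k) ^ 2 := by nlinarith [sq_abs (D y k), abs_nonneg (D y k)]
            calc a k ^ 2 = a k ^ 2 * 1 := by ring
              _ ≤ a k ^ 2 * (D y k) ^ 2 := by nlinarith [sq_nonneg (a k)]
              _ = (a k * D y k) ^ 2 := by ring
          · positivity
        have ht2 : (2 * c) ^ 2 < (∑ k, (a k * D y k) ^ 2) / 4 := by
          have : (2 * c) ^ 2 = p' / 16 := by rw [mul_pow]; rw [hcsq]; ring
          rw [this]
          nlinarith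
        have hcnt := count_small_le (fun k => a k * D y k) (2 * c) (by positivity) ht2
        have hcnt' : 16 * ((Finset.univ.filter
            (fun s : Fin N → Bool => |∑ k, rad (s k) * (a k * D y k)| ≤ 2 * c)).card)
            ≤ 13 * Fintype.card (Fin N → Bool) := by exact_mod_cast hcnt
        rw [Set.indicator_of_mem hy]
        calc ((Finset.univ.filter (fun s : Fin N → Bool =>
                |∑ k, rad (s k) * (a k * D y k)| ≤ 2 * c)).card : ℝ≥0∞) * 16
              + (Fintype.card (Fin N → Bool) : ℝ≥0∞) * 3 * 1
            ≤ (13 * Fintype.card (Fin N → Bool) : ℕ) + (Fintype.card (Fin N → Bool) : ℝ≥0∞) * 3 := by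
              rw [mul_one]
              refine add_le_add_left ?_ _
              rw [show (((Finset.univ.filter (fun s : Fin N → Bool =>
                |∑ k, rad (s k) * (a k * D y k)| ≤ 2 * c)).card : ℝ≥0∞) * 16)
                = ((16 * (Finset.univ.filter (fun s : Fin N → Bool =>
                  |∑ k, rad (s k) * (a k * D y k)| ≤ 2 * c)).card : ℕ) : ℝ≥0∞) by
                push_cast; ring]
              exact_mod_cast hcnt'
          _ ≤ (Fintype.card (Fin N → Bool) : ℝ≥0∞) * 16 := le_of_eq (by push_cast; ring)
      · -- off the good event, trivial bound
        rw [Set.indicator_of_notMem hy, mul_zero, add_zero]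
        have hline : ((Finset.univ.filter
            (fun s : Fin N → Bool => |∑ k, rad (s k) * (a k * D y k)| ≤ 2 * c)).card : ℝ≥0∞)
            ≤ (Fintype.card (Fin N → Bool) : ℝ≥0∞) := by
          rw [← Finset.card_univ]
          exact_mod_cast Nat.cast_le.mpr (Finset.card_le_card (Finset.filter_subset _ _))
        exact mul_le_mul_left hline 16
    -- integrate the pointwise bound
    have hint : ρ Bη * (Fintype.card (Fin N → Bool) : ℝ≥0∞) * 16
        + (Fintype.card (Fin N → Bool) : ℝ≥0∞) * 3 * ρ G
        ≤ (Fintype.card (Fin N → Bool) : ℝ≥0∞) * 16 := by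
      have hmeas_sum : Measurable fun y =>
          (∑ s : Fin N → Bool, Set.indicator (As s) (fun _ => (1 : ℝ≥0∞)) y) * 16 :=
        (Finset.measurable_sum _ fun s _ => measurable_const.indicator (hAsmeas s)).mul_const 16
      calc ρ Bη * (Fintype.card (Fin N → Bool) : ℝ≥0∞) * 16
            + (Fintype.card (Fin N → Bool) : ℝ≥0∞) * 3 * ρ G
          = ∫⁻ y, ((∑ s : Fin N → Bool, Set.indicator (As s) (fun _ => (1 : ℝ≥0∞)) y) * 16
              + (Fintype.card (Fin N → Bool) : ℝ≥0∞) * 3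
                * G.indicator (fun _ => (1 : ℝ≥0∞)) y) ∂ρ := by
            rw [lintegral_add_left hmeas_sum, lintegral_mul_const _
                (Finset.measurable_sum _ fun s _ => measurable_const.indicator (hAsmeas s)),
              ← hswap, ← hsum_meas, lintegral_const_mul _ (measurable_const.indicator hGmeas),
              lintegral_indicator_const hGmeas, one_mul]
        _ ≤ ∫⁻ _, (Fintype.card (Fin N → Bool) : ℝ≥0∞) * 16 ∂ρ := lintegral_mono hptw
        _ = (Fintype.card (Fin N → Bool) : ℝ≥0∞) * 16 := by
            rw [lintegral_const, measure_univ, mul_one]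
    -- cancel the cardinality factor
    have hMn0 : (Fintype.card (Fin N → Bool) : ℝ≥0∞) ≠ 0 := by
      simp [Fintype.card_ne_zero]
    have hMntop : (Fintype.card (Fin N → Bool) : ℝ≥0∞) ≠ ⊤ := ENNReal.natCast_ne_top _
    have hkey : 16 * ρ Bη + 3 * ρ G ≤ 16 := by
      have h1 : (Fintype.card (Fin N → Bool) : ℝ≥0∞) * (16 * ρ Bη + 3 * ρ G)
          ≤ (Fintype.card (Fin N → Bool) : ℝ≥0∞) * 16 := by
        calc (Fintype.card (Fin N → Bool) : ℝ≥0∞) * (16 * ρ Bη + 3 * ρ G)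
            = ρ Bη * (Fintype.card (Fin N → Bool) : ℝ≥0∞) * 16
              + (Fintype.card (Fin N → Bool) : ℝ≥0∞) * 3 * ρ G := by ring
          _ ≤ _ := hint
      exact (ENNReal.mul_le_mul_iff_right hMn0 hMntop).mp h1
    have hkey2 : 16 * ρ Bη + 3 * ENNReal.ofReal (p' / 2) ≤ 16 :=
      le_trans (add_le_add_right (mul_le_mul_right hGprob 3) _) hkey
    have hsub : 16 * ρ Bη ≤ 16 - 3 * ENNReal.ofReal (p' / 2) :=
      ENNReal.le_sub_of_add_le_right (by
        exact ENNReal.mul_ne_top (by norm_num) ENNReal.ofReal_ne_top) hkey2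
    have h16r : (16 : ℝ≥0∞) - 3 * ENNReal.ofReal (p' / 2) = 16 * ENNReal.ofReal r := by
      rw [show (3 : ℝ≥0∞) * ENNReal.ofReal (p' / 2) = ENNReal.ofReal (3 * (p' / 2)) by
          rw [ENNReal.ofReal_mul (by norm_num : (0:ℝ) ≤ 3)]; norm_num,
        show (16 : ℝ≥0∞) = ENNReal.ofReal 16 by norm_num,
        ← ENNReal.ofReal_sub 16 (by positivity),
        show (16 : ℝ) - 3 * (p' / 2) = 16 * r by rw [hrdef]; ring,
        ENNReal.ofReal_mul (by norm_num : (0:ℝ) ≤ 16)]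
    rw [h16r] at hsub
    exact (ENNReal.mul_le_mul_iff_right (by norm_num) (by norm_num)).mp hsub
  -- transfer along the joint law
  have hjointmeas : Measurable (fun ω k => ξ ω k) := measurable_pi_lambda _ hmeas
  have hjoint : Measure.pi μ = P.map (fun ω k => ξ ω k) := by
    refine Measure.pi_eq fun s hs => ?_
    rw [Measure.map_apply hjointmeas (MeasurableSet.univ_pi hs)]
    have hpre : (fun ω k => ξ ω k) ⁻¹' Set.pi Set.univ s
        = ⋂ k ∈ Finset.univ, (fun ω => ξ ω k) ⁻¹' s k := by
      ext ω; simp [Set.mem_pi]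
    rw [hpre, hInd.measure_inter_preimage_eq_mul Finset.univ (fun k _ => hs k)]
    refine Finset.prod_congr rfl fun k _ => ?_
    rw [hμdef, Measure.map_apply (hmeas k) (hs k)]
  -- conclusion
  rw [concFn]
  refine iSup_le fun u => ?_
  set Bu : Set (Fin N → ℝ) := {x | |(∑ k, a k * x k) - u| ≤ c} with hBudef
  have hBumeas : MeasurableSet Bu := by
    refine measurableSet_le (Measurable.abs ?_) measurable_const
    exact ((Finset.measurable_sum _ fun k _ =>
      (by fun_prop : Measurable fun x : Fin N → ℝ => a k * x k)).sub_const u)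
  have hPA : P {ω | ‖(∑ k, a k * ξ ω k) - u‖ ≤ c} = Measure.pi μ Bu := by
    rw [hjoint, Measure.map_apply hjointmeas hBumeas]
    have hseteq : (fun ω k => ξ ω k) ⁻¹' Bu = {ω | ‖(∑ k, a k * ξ ω k) - u‖ ≤ c} := by
      ext ω; simp [hBudef, Real.norm_eq_abs]
    rw [hseteq]
  rw [hPA]
  -- symmetrization
  have hsym : Measure.pi μ Bu * Measure.pi μ Bu ≤ ρ Bη := by
    have hψ : MeasurePreserving (MeasurableEquiv.arrowProdEquivProdArrow ℝ ℝ (Fin N)) ρ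
        ((Measure.pi μ).prod (Measure.pi μ)) := by
      rw [hρdef, hρkdef]
      exact measurePreserving_arrowProdEquivProdArrow ℝ ℝ (Fin N) μ μ
    have hprod : Measure.pi μ Bu * Measure.pi μ Bu
        = ρ ((MeasurableEquiv.arrowProdEquivProdArrow ℝ ℝ (Fin N)) ⁻¹' (Bu ×ˢ Bu)) := by
      rw [hψ.measure_preimage (hBumeas.prod hBumeas).nullMeasurableSet, Measure.prod_prod]
    rw [hprod]
    refine measure_mono ?_
    intro y hy
    have hy' : ((fun k => (y k).1) ∈ Bu) ∧ ((fun k => (y k).2) ∈ Bu) := hy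
    simp only [hBudef, Set.mem_setOf_eq] at hy'
    simp only [hBηdef, Set.mem_setOf_eq, hDdef]
    have hsumeq : ∑ k, a k * ((y k).1 - (y k).2)
        = (∑ k, a k * (y k).1) - (∑ k, a k * (y k).2) := by
      rw [← Finset.sum_sub_distrib]
      exact Finset.sum_congr rfl fun k _ => by ring
    rw [hsumeq]
    have htri := abs_sub_le (∑ k, a k * (y k).1) u (∑ k, a k * (y k).2)
    have hcomm : |u - ∑ k, a k * (y k).2| = |(∑ k, a k * (y k).2) - u| := abs_sub_comm _ _
    linarith [hy'.1, hy'.2]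
  -- finish
  have hle : Measure.pi μ Bu * Measure.pi μ Bu ≤ ENNReal.ofReal r := le_trans hsym hBη
  by_contra hcon
  push_neg at hcon
  have h1 : ENNReal.ofReal r < Measure.pi μ Bu * Measure.pi μ Bu := by
    have : ENNReal.ofReal r = ENNReal.ofReal (1 - c') * ENNReal.ofReal (1 - c') := by
      rw [← ENNReal.ofReal_mul (hsqrt_r ▸ Real.sqrt_nonneg r), ← hsqrt_r, Real.mul_self_sqrt hr0.le]
    rw [this]
    exact ENNReal.mul_lt_mul hcon hcon
  exact absurd hle (not_le.mpr h1)
end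
end
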